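/- arXiv:2409.03871 — 7 statements merged into one kernel-verified Lean document; each statement's English description precedes it below -/
import Mathlib

section
/- Bound on Q_{V1}: Under the setup assumptions, define Q_{V1}(t_s, t_e) := ∑_{i=1}^l ω₁^{p_i} ∫_{t_s}^{t_e} ∫_{t_s}^{θ} ∂_t f_i(τ, x(τ)) u_i(ω₁θ) dτ dθ. Then ‖Q_{V1}(t_s, t_e)‖ ≤ π l L Λ₁ ‖x₀‖ ω₁^{p′−1} T₁. -/
open MeasureTheory Real Filter

noncomputable section

/-- The state space `ℝ^n`. -/
abbrev E (n : ℕ) := EuclideanSpace ℝ (Fin n)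

/-- Lie derivative `L_{f_a} f_b (t,x) = D_x f_b(t,x) [f_a(t,x)]`. -/
def lieDeriv {n : ℕ} (f : ℕ → ℝ → E n → E n)
    (Df : ℕ → ℝ → E n → (E n →L[ℝ] E n)) (a b : ℕ) (t : ℝ) (x : E n) : E n :=
  Df b t x (f a t x)

/-- Second Lie derivative `L_{f_m} L_{f_j} f_i (t,x) = D_x (L_{f_j} f_i)(t,x) [f_m(t,x)]`. -/
def lieDeriv2 {n : ℕ} (f : ℕ → ℝ → E n → E n)
    (Df : ℕ → ℝ → E n → (E n →L[ℝ] E n))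
    (DLf : ℕ → ℕ → ℝ → E n → (E n →L[ℝ] E n)) (m j i : ℕ) (t : ℝ) (x : E n) : E n :=
  DLf j i t x (f m t x)

/-- Lie bracket `[f_i, f_j] = L_{f_i} f_j − L_{f_j} f_i`. -/
def lieBracket {n : ℕ} (f : ℕ → ℝ → E n → E n)
    (Df : ℕ → ℝ → E n → (E n →L[ℝ] E n)) (i j : ℕ) (t : ℝ) (x : E n) : E n :=
  lieDeriv f Df i j t x - lieDeriv f Df j i t x

/-- `γ_{ij}(ω) = (ω^{p_i+p_j}/T) ∫₀^T ∫₀^θ u_j(ωθ) u_i(ωτ) dτ dθ`, `T = 2π/ω`. -/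
def gammaCoeff (p : ℕ → ℝ) (u : ℕ → ℝ → ℝ) (i j : ℕ) (ω : ℝ) : ℝ :=
  ω ^ (p i + p j) / (2 * π / ω) *
    ∫ θ in (0:ℝ)..(2 * π / ω), ∫ τ in (0:ℝ)..θ, u j (ω * θ) * u i (ω * τ)

/-- Regularity of a time-dependent vector field: continuous in the first argument,
globally uniformly `L`-Lipschitz in the second argument, and vanishing at `x = 0`. -/
def RegVF {n : ℕ} (L : ℝ) (g : ℝ → E n → E n) : Prop :=
  (∀ x, Continuous fun t => g t x) ∧
  (∀ t x y, ‖g t x - g t y‖ ≤ L * ‖x - y‖) ∧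
  (∀ t, g t 0 = 0)

/-- Standing assumptions: dither assumptions and vector-field assumptions. -/
structure Hyps {n : ℕ} (l : ℕ)
    (f : ℕ → ℝ → E n → E n)
    (Df : ℕ → ℝ → E n → (E n →L[ℝ] E n))
    (ft : ℕ → ℝ → E n → E n)
    (Lft : ℕ → ℕ → ℝ → E n → E n)
    (DLf : ℕ → ℕ → ℝ → E n → (E n →L[ℝ] E n))
    (u : ℕ → ℝ → ℝ) (p : ℕ → ℝ) (L : ℝ) : Prop where
  hp0 : p 0 = 0
  hu0 : ∀ t, u 0 t = 1
  hp : ∀ i, 1 ≤ i → i ≤ l → p i ∈ Set.Ioo (0:ℝ) 1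
  humeas : ∀ i, i ≤ l → Measurable (u i)
  hubdd : ∀ i, i ≤ l → ∀ t, |u i t| ≤ 1
  huper : ∀ i, i ≤ l → ∀ t, u i (t + 2 * π) = u i t
  huzm : ∀ i, 1 ≤ i → i ≤ l → (∫ t in (0:ℝ)..(2 * π), u i t) = 0
  hLpos : 0 < L
  hDf : ∀ i, i ≤ l → ∀ t x, HasFDerivAt (f i t) (Df i t x) x
  hft : ∀ i, i ≤ l → ∀ x t, HasDerivAt (fun s => f i s x) (ft i t x) t
  hLft : ∀ i j, i ≤ l → j ≤ l → ∀ x t,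
    HasDerivAt (fun s => lieDeriv f Df j i s x) (Lft j i t x) t
  hDLf : ∀ i j, i ≤ l → j ≤ l → ∀ t x,
    HasFDerivAt (fun y => lieDeriv f Df j i t y) (DLf j i t x) x
  hreg_f : ∀ i, i ≤ l → RegVF L (f i)
  hreg_ft : ∀ i, i ≤ l → RegVF L (ft i)
  hreg_Lf : ∀ i j, i ≤ l → j ≤ l → RegVF L (lieDeriv f Df j i)
  hreg_Lft : ∀ i j, i ≤ l → j ≤ l → RegVF L (Lft j i)
  hreg_LLf : ∀ i j m, i ≤ l → j ≤ l → m ≤ l → RegVF L (lieDeriv2 f Df DLf m j i)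

/-- The interaction condition on the powers `p_i` and the Lie brackets. -/
def InteractionCondition {n : ℕ} (l : ℕ) (f : ℕ → ℝ → E n → E n)
    (Df : ℕ → ℝ → E n → (E n →L[ℝ] E n)) (u : ℕ → ℝ → ℝ) (p : ℕ → ℝ) : Prop :=
  ∀ i j, 1 ≤ i → i ≤ l → 1 ≤ j → j ≤ l → 1 < p i + p j →
    (∀ ω : ℝ, 0 < ω → gammaCoeff p u i j ω = 0) ∨
    (∀ (t : ℝ) (x : E n), lieBracket f Df i j t x = 0)

/-- `x` is a (Carathéodory, i.e. integral-form) solution of the input-affine system (S)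
with dither frequency `ω` on the set `s`, with initial time `t₀`. -/
def IsSSol {n : ℕ} (l : ℕ) (f : ℕ → ℝ → E n → E n) (u : ℕ → ℝ → ℝ) (p : ℕ → ℝ)
    (ω : ℝ) (x : ℝ → E n) (s : Set ℝ) (t₀ : ℝ) : Prop :=
  ContinuousOn x s ∧
  ∀ t ∈ s, x t = x t₀ + ∫ τ in t₀..t,
    (f 0 τ (x τ) + ∑ i ∈ Finset.Icc 1 l, (ω ^ p i * u i (ω * τ)) • f i τ (x τ))

/-- `x` is a solution of the associated Lie-bracket system (LBS), with coefficients
`ν i j = lim_{ω → ∞} γ_{ij}(ω)`, on the set `s`, with initial time `t₀`. -/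
def IsLBSSol {n : ℕ} (l : ℕ) (f : ℕ → ℝ → E n → E n)
    (Df : ℕ → ℝ → E n → (E n →L[ℝ] E n)) (ν : ℕ → ℕ → ℝ)
    (x : ℝ → E n) (s : Set ℝ) (t₀ : ℝ) : Prop :=
  ContinuousOn x s ∧
  ∀ t ∈ s, x t = x t₀ + ∫ τ in t₀..t,
    (f 0 τ (x τ) + ∑ i ∈ Finset.Icc 1 l, ∑ j ∈ Finset.Ioc i l,
      ν i j • lieBracket f Df i j τ (x τ))

end
noncomputable section

/-- `V_i(t_s, t_e) = ∫_{t_s}^{t_e} ω₁^{p_i} u_i(ω₁ θ) dθ`. -/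
def Vi (u : ℕ → ℝ → ℝ) (p : ℕ → ℝ) (ω₁ : ℝ) (i : ℕ) (ts te : ℝ) : ℝ :=
  ∫ θ in ts..te, ω₁ ^ p i * u i (ω₁ * θ)

/-- `V_{ij}(t_s, t_e) = ∫_{t_s}^{t_e} ω₁^{p_i} u_i(ω₁ θ) V_j(t_s, θ) dθ`. -/
def Vij (u : ℕ → ℝ → ℝ) (p : ℕ → ℝ) (ω₁ : ℝ) (i j : ℕ) (ts te : ℝ) : ℝ :=
  ∫ θ in ts..te, (ω₁ ^ p i * u i (ω₁ * θ)) * Vi u p ω₁ j ts θ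

/-- The remainder `R(t_s, t_e)`. -/
def Rrem {n : ℕ} (l : ℕ) (f : ℕ → ℝ → E n → E n)
    (Df : ℕ → ℝ → E n → (E n →L[ℝ] E n))
    (DLf : ℕ → ℕ → ℝ → E n → (E n →L[ℝ] E n))
    (u : ℕ → ℝ → ℝ) (p : ℕ → ℝ) (ω₁ : ℝ) (x : ℝ → E n) (ts te : ℝ) : E n :=
  ∑ i ∈ Finset.Icc 1 l, ∑ j ∈ Finset.Icc 0 l, ∑ m ∈ Finset.Icc 0 l,
    ω₁ ^ (p i + p j + p m) •
      ∫ θ in ts..te, u i (ω₁ * θ) •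
        ∫ τ in ts..θ, u j (ω₁ * τ) •
          ∫ σ in ts..τ, u m (ω₁ * σ) • lieDeriv2 f Df DLf m j i σ (x σ)

/-- The term `Q_{V1}(t_s, t_e)`. -/
def QV1 {n : ℕ} (l : ℕ) (ft : ℕ → ℝ → E n → E n)
    (u : ℕ → ℝ → ℝ) (p : ℕ → ℝ) (ω₁ : ℝ) (x : ℝ → E n) (ts te : ℝ) : E n :=
  ∑ i ∈ Finset.Icc 1 l, ω₁ ^ p i •
    ∫ θ in ts..te, u i (ω₁ * θ) • ∫ τ in ts..θ, ft i τ (x τ)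

/-- The term `Q_{V2}(t_s, t_e)`. -/
def QV2 {n : ℕ} (l : ℕ) (Lft : ℕ → ℕ → ℝ → E n → E n)
    (u : ℕ → ℝ → ℝ) (p : ℕ → ℝ) (ω₁ : ℝ) (x : ℝ → E n) (ts te : ℝ) : E n :=
  ∑ i ∈ Finset.Ico 1 l, ∑ j ∈ Finset.Icc 0 l,
    ω₁ ^ (p i + p j) •
      ∫ θ in ts..te, u i (ω₁ * θ) •
        ∫ τ in ts..θ, u j (ω₁ * τ) • ∫ σ in ts..τ, Lft j i σ (x σ)

/-- The term `Q_1(t_s, t_e)`. -/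
def Q1 {n : ℕ} (l : ℕ) (f : ℕ → ℝ → E n → E n)
    (Df : ℕ → ℝ → E n → (E n →L[ℝ] E n))
    (u : ℕ → ℝ → ℝ) (p : ℕ → ℝ) (ω₁ : ℝ) (x : ℝ → E n) (ts te : ℝ) : E n :=
  ∑ i ∈ Finset.Icc 1 l, Vij u p ω₁ i 0 ts te • lieDeriv f Df 0 i ts (x ts)

/-- The term `Q_{1T}(t_s, t_e)`. -/
def Q1T {n : ℕ} (l : ℕ) (f : ℕ → ℝ → E n → E n)
    (Df : ℕ → ℝ → E n → (E n →L[ℝ] E n))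
    (u : ℕ → ℝ → ℝ) (p : ℕ → ℝ) (ω₁ : ℝ) (x : ℝ → E n) (ts te : ℝ) : E n :=
  (∑ i ∈ Finset.Icc 1 l, ∑ j ∈ Finset.Ioc i l,
    (Vi u p ω₁ i ts te * Vi u p ω₁ j ts te) • lieDeriv f Df j i ts (x ts))
  + (1/2 : ℝ) • ∑ i ∈ Finset.Icc 1 l,
      ((Vi u p ω₁ i ts te) ^ 2) • lieDeriv f Df i i ts (x ts)

/-- The term `H(t_s, t_e)`. -/
def Hterm {n : ℕ} (l : ℕ) (f : ℕ → ℝ → E n → E n)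
    (Df : ℕ → ℝ → E n → (E n →L[ℝ] E n))
    (u : ℕ → ℝ → ℝ) (p : ℕ → ℝ) (ω₁ : ℝ) (x : ℝ → E n) (ts te : ℝ) : E n :=
  (∑ i ∈ Finset.Icc 1 l, Vi u p ω₁ i ts te • f i ts (x ts))
  + ∑ i ∈ Finset.Icc 1 l, ∑ j ∈ Finset.Ioc i l,
      Vij u p ω₁ j i ts te • lieBracket f Df i j ts (x ts)

/-- The term `I(t_s, t_e)`. -/
def Iterm {n : ℕ} (l : ℕ) (f : ℕ → ℝ → E n → E n)
    (Df : ℕ → ℝ → E n → (E n →L[ℝ] E n))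
    (u : ℕ → ℝ → ℝ) (p : ℕ → ℝ) (ω₁ : ℝ) (x : ℝ → E n) (ts te : ℝ) : E n :=
  ∫ θ in ts..te, ∑ i ∈ Finset.Icc 1 l, ∑ j ∈ Finset.Ioc i l,
    gammaCoeff p u i j ω₁ • lieBracket f Df i j θ (x θ)

/-- The term `R_{L1}(t_s, t_e)`. -/
def RL1 {n : ℕ} (l : ℕ) (f : ℕ → ℝ → E n → E n)
    (Df : ℕ → ℝ → E n → (E n →L[ℝ] E n))
    (u : ℕ → ℝ → ℝ) (p : ℕ → ℝ) (ω₁ : ℝ) (x : ℝ → E n) (ts te : ℝ) : E n :=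
  ∑ i ∈ Finset.Icc 1 l, ∑ j ∈ Finset.Ioc i l,
    gammaCoeff p u i j ω₁ •
      ∫ θ in ts..te, (lieBracket f Df i j ts (x ts) - lieBracket f Df i j θ (x θ))

/-- The remainder `R_{T1}(t₀, t₁)`. -/
def RT1 {n : ℕ} (l : ℕ) (f : ℕ → ℝ → E n → E n)
    (Df : ℕ → ℝ → E n → (E n →L[ℝ] E n))
    (ft : ℕ → ℝ → E n → E n) (Lft : ℕ → ℕ → ℝ → E n → E n)
    (u : ℕ → ℝ → ℝ) (p : ℕ → ℝ) (ω₁ : ℝ) (x : ℝ → E n) (t₀ t₁ : ℝ) : E n :=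
  let T₁ : ℝ := 2 * π / ω₁
  let r : ℕ := ⌊(t₁ - t₀) / T₁⌋₊
  let tq : ℕ → ℝ := fun q => t₀ + (q : ℝ) * T₁
  (∑ q ∈ Finset.range r,
      (QV1 l ft u p ω₁ x (tq q) (tq (q+1)) + QV2 l Lft u p ω₁ x (tq q) (tq (q+1))
        + Q1 l f Df u p ω₁ x (tq q) (tq (q+1)) + RL1 l f Df u p ω₁ x (tq q) (tq (q+1))))
    - Iterm l f Df u p ω₁ x (tq r) t₁
    + QV1 l ft u p ω₁ x (tq r) t₁ + QV2 l Lft u p ω₁ x (tq r) t₁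
    + Q1 l f Df u p ω₁ x (tq r) t₁ + Q1T l f Df u p ω₁ x (tq r) t₁
    + Hterm l f Df u p ω₁ x (tq r) t₁

end

/-- **Bound on `Q_{V1}`** (Lemma 7). -/
theorem bound_QV1
    {n : ℕ} (l : ℕ)
    (f : ℕ → ℝ → E n → E n)
    (Df : ℕ → ℝ → E n → (E n →L[ℝ] E n))
    (ft : ℕ → ℝ → E n → E n)
    (Lft : ℕ → ℕ → ℝ → E n → E n)
    (DLf : ℕ → ℕ → ℝ → E n → (E n →L[ℝ] E n))
    (u : ℕ → ℝ → ℝ) (p : ℕ → ℝ) (L : ℝ)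
    (hyp : Hyps l f Df ft Lft DLf u p L)
    -- setup: a bounded solution of (S) with frequency `ω₁ ≥ 1` on `[t₀, t₁]`
    (t₀ t₁ ω₁ Λ₁ : ℝ) (x₀ : E n) (x : ℝ → E n)
    (h01 : t₀ < t₁) (hω₁ : 1 ≤ ω₁) (hΛ₁ : 1 ≤ Λ₁)
    (hx0 : x t₀ = x₀)
    (hsol : IsSSol l f u p ω₁ x (Set.Icc t₀ t₁) t₀)
    (hxb : ∀ t ∈ Set.Icc t₀ t₁, ‖x t‖ ≤ Λ₁ * ‖x₀‖)
    -- `p′ = max_{1 ≤ i ≤ l} p i`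
    (p' : ℝ)
    (hp'ub : ∀ i, 1 ≤ i → i ≤ l → p i ≤ p')
    (hp'mem : ∃ i, 1 ≤ i ∧ i ≤ l ∧ p i = p')
    -- `t_s ∈ [t₀, t_r]` and `t_e ∈ [t_s, min (t_s + T₁) t₁]`, where `T₁ = 2π/ω₁`
    (ts te : ℝ)
    (hts : ts ∈ Set.Icc t₀ (t₀ + (⌊(t₁ - t₀) / (2 * π / ω₁)⌋₊ : ℝ) * (2 * π / ω₁)))
    (hte : te ∈ Set.Icc ts (min (ts + 2 * π / ω₁) t₁)) :
    ‖QV1 l ft u p ω₁ x ts te‖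
      ≤ π * l * L * Λ₁ * ‖x₀‖ * ω₁ ^ (p' - 1) * (2 * π / ω₁) := by
  have hω₀ : (0:ℝ) < ω₁ := lt_of_lt_of_le one_pos hω₁
  have hπ : (0:ℝ) < π := Real.pi_pos
  set T₁ : ℝ := 2 * π / ω₁ with hT₁def
  have hT₁pos : 0 < T₁ := by positivity
  have hC0 : 0 ≤ L * (Λ₁ * ‖x₀‖) := by
    have := hyp.hLpos.le
    positivity
  obtain ⟨hts0, hts1⟩ := hts
  obtain ⟨htse, hte1⟩ := hte
  have hteT : te - ts ≤ T₁ := by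
    have := le_trans hte1 (min_le_left _ _); linarith
  have hte_t1 : te ≤ t₁ := le_trans hte1 (min_le_right _ _)
  -- pointwise bound on ft
  have hxbound : ∀ i, i ≤ l → ∀ τ ∈ Set.Icc t₀ t₁,
      ‖ft i τ (x τ)‖ ≤ L * (Λ₁ * ‖x₀‖) := by
    intro i hi τ hτ
    obtain ⟨hcont, hlip, hzero⟩ := hyp.hreg_ft i hi
    have h1 := hlip τ (x τ) 0
    rw [hzero, sub_zero, sub_zero] at h1
    exact h1.trans (mul_le_mul_of_nonneg_left (hxb τ hτ) hyp.hLpos.le)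
  -- main per-index estimate
  have key : ∀ i ∈ Finset.Icc 1 l,
      ‖ω₁ ^ p i • ∫ θ in ts..te, u i (ω₁ * θ) • ∫ τ in ts..θ, ft i τ (x τ)‖
        ≤ ω₁ ^ p' * (L * (Λ₁ * ‖x₀‖) * (T₁ ^ 2 / 2)) := by
    intro i hi
    obtain ⟨hi1, hil⟩ := Finset.mem_Icc.mp hi
    have hbound : ‖∫ θ in ts..te, u i (ω₁ * θ) • ∫ τ in ts..θ, ft i τ (x τ)‖
        ≤ |∫ θ in ts..te, L * (Λ₁ * ‖x₀‖) * (θ - ts)| := by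
      apply intervalIntegral.norm_integral_le_abs_of_norm_le
      · filter_upwards [MeasureTheory.ae_restrict_mem measurableSet_uIoc] with θ hθ
        rw [Set.uIoc_of_le htse] at hθ
        have hθ1 : ts < θ := hθ.1
        have hθ2 : θ ≤ te := hθ.2
        rw [norm_smul]
        have hinner : ‖∫ τ in ts..θ, ft i τ (x τ)‖ ≤ L * (Λ₁ * ‖x₀‖) * |θ - ts| := by
          apply intervalIntegral.norm_integral_le_of_norm_le_const
          intro τ hτ
          rw [Set.uIoc_of_le hθ1.le] at hτ
          exact hxbound i hil τ ⟨hts0.trans hτ.1.le, hτ.2.trans (hθ2.trans hte_t1)⟩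
        have hu : ‖u i (ω₁ * θ)‖ ≤ 1 := by
          rw [Real.norm_eq_abs]; exact hyp.hubdd i hil _
        calc ‖u i (ω₁ * θ)‖ * ‖∫ τ in ts..θ, ft i τ (x τ)‖
            ≤ 1 * (L * (Λ₁ * ‖x₀‖) * |θ - ts|) :=
              mul_le_mul hu hinner (norm_nonneg _) zero_le_one
          _ = L * (Λ₁ * ‖x₀‖) * (θ - ts) := by
              rw [one_mul, abs_of_nonneg (by linarith : (0:ℝ) ≤ θ - ts)]
      · exact (((continuous_id.intervalIntegrable _ _).sub intervalIntegrable_const).const_mul _)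
    have hval : ∫ θ in ts..te, L * (Λ₁ * ‖x₀‖) * (θ - ts)
        = L * (Λ₁ * ‖x₀‖) * ((te - ts) ^ 2 / 2) := by
      rw [intervalIntegral.integral_const_mul]
      have : (∫ θ in ts..te, (θ - ts)) = (te - ts) ^ 2 / 2 := by
        rw [intervalIntegral.integral_comp_sub_right (fun y => y) ts, sub_self, integral_id]
        ring
      rw [this]
    have hsq : (te - ts) ^ 2 ≤ T₁ ^ 2 :=
      pow_le_pow_left₀ (by linarith) hteT 2
    have hpow : ω₁ ^ p i ≤ ω₁ ^ p' :=
      Real.rpow_le_rpow_of_exponent_le hω₁ (hp'ub i hi1 hil)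
    have hpow0 : (0:ℝ) ≤ ω₁ ^ p i := (Real.rpow_pos_of_pos hω₀ _).le
    rw [norm_smul, Real.norm_eq_abs, abs_of_nonneg hpow0]
    calc ω₁ ^ p i * ‖∫ θ in ts..te, u i (ω₁ * θ) • ∫ τ in ts..θ, ft i τ (x τ)‖
        ≤ ω₁ ^ p' * (L * (Λ₁ * ‖x₀‖) * ((te - ts) ^ 2 / 2)) := by
          apply mul_le_mul hpow _ (norm_nonneg _) (Real.rpow_pos_of_pos hω₀ _).le
          calc ‖∫ θ in ts..te, u i (ω₁ * θ) • ∫ τ in ts..θ, ft i τ (x τ)‖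
              ≤ |∫ θ in ts..te, L * (Λ₁ * ‖x₀‖) * (θ - ts)| := hbound
            _ = L * (Λ₁ * ‖x₀‖) * ((te - ts) ^ 2 / 2) := by
                rw [hval, abs_of_nonneg]
                have : (0:ℝ) ≤ (te - ts) ^ 2 / 2 := by positivity
                exact mul_nonneg hC0 this
      _ ≤ ω₁ ^ p' * (L * (Λ₁ * ‖x₀‖) * (T₁ ^ 2 / 2)) := by
          apply mul_le_mul_of_nonneg_left _ (Real.rpow_pos_of_pos hω₀ _).le
          apply mul_le_mul_of_nonneg_left _ hC0
          linarith
  -- sum up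
  have hsum : ‖QV1 l ft u p ω₁ x ts te‖
      ≤ (l : ℝ) * (ω₁ ^ p' * (L * (Λ₁ * ‖x₀‖) * (T₁ ^ 2 / 2))) := by
    unfold QV1
    calc ‖∑ i ∈ Finset.Icc 1 l, ω₁ ^ p i •
          ∫ θ in ts..te, u i (ω₁ * θ) • ∫ τ in ts..θ, ft i τ (x τ)‖
        ≤ ∑ i ∈ Finset.Icc 1 l,
            ‖ω₁ ^ p i • ∫ θ in ts..te, u i (ω₁ * θ) • ∫ τ in ts..θ, ft i τ (x τ)‖ :=
          norm_sum_le _ _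
      _ ≤ ∑ _i ∈ Finset.Icc 1 l, ω₁ ^ p' * (L * (Λ₁ * ‖x₀‖) * (T₁ ^ 2 / 2)) :=
          Finset.sum_le_sum key
      _ = (l : ℝ) * (ω₁ ^ p' * (L * (Λ₁ * ‖x₀‖) * (T₁ ^ 2 / 2))) := by
          rw [Finset.sum_const, Nat.card_Icc, nsmul_eq_mul]
          norm_num
  refine hsum.trans (le_of_eq ?_)
  have hrpow : ω₁ ^ (p' - 1) = ω₁ ^ p' / ω₁ := by
    rw [Real.rpow_sub hω₀, Real.rpow_one]
  rw [hrpow, hT₁def]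
  field_simp
end

section
/- Bound on Q_{V2}: Under the setup assumptions, define Q_{V2}(t_s, t_e) := ∑_{1≤i<l, 0≤j≤l} ω₁^{p_i+p_j} ∫_{t_s}^{t_e} u_i(ω₁θ) ∫_{t_s}^{θ} u_j(ω₁τ) ∫_{t_s}^{τ} ∂_t L_{f_j}f_i(σ, x(σ)) dσ dτ dθ. Then ‖Q_{V2}(t_s, t_e)‖ ≤ (2/3) π² l² L Λ₁ ‖x₀‖ ω₁^{p′−1} T₁. -/
open MeasureTheory Real Filter

/-- **Bound on `Q_{V2}`** (Lemma 8). -/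
theorem bound_QV2
    {n : ℕ} (l : ℕ)
    (f : ℕ → ℝ → E n → E n)
    (Df : ℕ → ℝ → E n → (E n →L[ℝ] E n))
    (ft : ℕ → ℝ → E n → E n)
    (Lft : ℕ → ℕ → ℝ → E n → E n)
    (DLf : ℕ → ℕ → ℝ → E n → (E n →L[ℝ] E n))
    (u : ℕ → ℝ → ℝ) (p : ℕ → ℝ) (L : ℝ)
    (hyp : Hyps l f Df ft Lft DLf u p L)
    -- setup: a bounded solution of (S) with frequency `ω₁ ≥ 1` on `[t₀, t₁]`
    (t₀ t₁ ω₁ Λ₁ : ℝ) (x₀ : E n) (x : ℝ → E n)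
    (h01 : t₀ < t₁) (hω₁ : 1 ≤ ω₁) (hΛ₁ : 1 ≤ Λ₁)
    (hx0 : x t₀ = x₀)
    (hsol : IsSSol l f u p ω₁ x (Set.Icc t₀ t₁) t₀)
    (hxb : ∀ t ∈ Set.Icc t₀ t₁, ‖x t‖ ≤ Λ₁ * ‖x₀‖)
    -- `p′ = max_{1 ≤ i ≤ l} p i`
    (p' : ℝ)
    (hp'ub : ∀ i, 1 ≤ i → i ≤ l → p i ≤ p')
    (hp'mem : ∃ i, 1 ≤ i ∧ i ≤ l ∧ p i = p')
    -- `t_s ∈ [t₀, t_r]` and `t_e ∈ [t_s, min (t_s + T₁) t₁]`, where `T₁ = 2π/ω₁`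
    (ts te : ℝ)
    (hts : ts ∈ Set.Icc t₀ (t₀ + (⌊(t₁ - t₀) / (2 * π / ω₁)⌋₊ : ℝ) * (2 * π / ω₁)))
    (hte : te ∈ Set.Icc ts (min (ts + 2 * π / ω₁) t₁)) :
    ‖QV2 l Lft u p ω₁ x ts te‖
      ≤ (2/3) * π ^ 2 * l ^ 2 * L * Λ₁ * ‖x₀‖ * ω₁ ^ (p' - 1) * (2 * π / ω₁) :=
  by
  have hπ : (0:ℝ) < π := Real.pi_pos
  have hω0 : (0:ℝ) < ω₁ := lt_of_lt_of_le one_pos hω₁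
  obtain ⟨hste, hteub⟩ := hte
  have hte1 : te ≤ t₁ := le_trans hteub (min_le_right _ _)
  have hteT : te - ts ≤ 2 * π / ω₁ := by
    have := le_trans hteub (min_le_left _ _); linarith
  have hts0 : t₀ ≤ ts := hts.1
  set C := L * (Λ₁ * ‖x₀‖) with hCdef
  have hC0 : 0 ≤ C := by
    have := norm_nonneg x₀
    have : (0:ℝ) ≤ Λ₁ * ‖x₀‖ := mul_nonneg (by linarith) (norm_nonneg x₀)
    exact mul_nonneg hyp.hLpos.le this
  -- p' ∈ (0,1)
  obtain ⟨i0, hi01, hi0l, hpi0⟩ := hp'mem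
  have hp'mem' := hyp.hp i0 hi01 hi0l
  have hp'pos : 0 < p' := hpi0 ▸ hp'mem'.1
  have hp'lt : p' < 1 := hpi0 ▸ hp'mem'.2
  set B : ℝ := (4/3) * π^3 * C * ω₁ ^ (p' - 2) with hBdef
  have hB0 : 0 ≤ B := by
    have h1 : (0:ℝ) < ω₁ ^ (p' - 2) := Real.rpow_pos_of_pos hω0 _
    positivity
  -- key per-term bound
  have key : ∀ i ∈ Finset.Ico 1 l, ∀ j ∈ Finset.Icc 0 l,
      ‖ω₁ ^ (p i + p j) •
        ∫ θ in ts..te, u i (ω₁ * θ) •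
          ∫ τ in ts..θ, u j (ω₁ * τ) • ∫ σ in ts..τ, Lft j i σ (x σ)‖ ≤ B := by
    intro i hi j hj
    rw [Finset.mem_Ico] at hi
    rw [Finset.mem_Icc] at hj
    have hil : i ≤ l := le_of_lt hi.2
    have hjl : j ≤ l := hj.2
    obtain ⟨hcont, hlip, hzero⟩ := hyp.hreg_Lft i j hil hjl
    -- pointwise bound on the innermost integrand
    have hxbound : ∀ σ ∈ Set.Icc ts te, ‖Lft j i σ (x σ)‖ ≤ C := by
      intro σ hσ
      have hσmem : σ ∈ Set.Icc t₀ t₁ := ⟨le_trans hts0 hσ.1, le_trans hσ.2 hte1⟩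
      calc ‖Lft j i σ (x σ)‖ = ‖Lft j i σ (x σ) - Lft j i σ 0‖ := by
              rw [hzero, sub_zero]
        _ ≤ L * ‖x σ - 0‖ := hlip σ _ _
        _ = L * ‖x σ‖ := by rw [sub_zero]
        _ ≤ C := mul_le_mul_of_nonneg_left (hxb σ hσmem) hyp.hLpos.le
    -- innermost integral bound
    have hI : ∀ τ ∈ Set.Icc ts te, ‖∫ σ in ts..τ, Lft j i σ (x σ)‖ ≤ C * (τ - ts) := by
      intro τ hτ
      have h := intervalIntegral.norm_integral_le_of_norm_le_const (C := C)
        (f := fun σ => Lft j i σ (x σ)) (a := ts) (b := τ) (fun σ hσ => by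
          rw [Set.uIoc_of_le hτ.1] at hσ
          exact hxbound σ ⟨hσ.1.le, le_trans hσ.2 hτ.2⟩)
      rwa [abs_of_nonneg (sub_nonneg.2 hτ.1)] at h
    -- middle integral bound
    have hJ : ∀ θ ∈ Set.Icc ts te,
        ‖∫ τ in ts..θ, u j (ω₁ * τ) • ∫ σ in ts..τ, Lft j i σ (x σ)‖
          ≤ C * (θ - ts)^2 / 2 := by
      intro θ hθ
      have hgint : IntervalIntegrable (fun τ => C * (τ - ts)) volume ts θ :=
        (continuous_const.mul (continuous_id.sub continuous_const)).intervalIntegrable ts θ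
      have hb : ∀ᵐ τ ∂volume.restrict (Set.uIoc ts θ),
          ‖u j (ω₁ * τ) • ∫ σ in ts..τ, Lft j i σ (x σ)‖ ≤ C * (τ - ts) := by
        refine (ae_restrict_iff' measurableSet_uIoc).2 (Filter.Eventually.of_forall ?_)
        intro τ hτ
        rw [Set.uIoc_of_le hθ.1] at hτ
        have hτm : τ ∈ Set.Icc ts te := ⟨hτ.1.le, le_trans hτ.2 hθ.2⟩
        rw [norm_smul, Real.norm_eq_abs]
        calc |u j (ω₁ * τ)| * ‖∫ σ in ts..τ, Lft j i σ (x σ)‖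
            ≤ 1 * (C * (τ - ts)) :=
              mul_le_mul (hyp.hubdd j hjl _) (hI τ hτm) (norm_nonneg _) zero_le_one
          _ = C * (τ - ts) := one_mul _
      have h := intervalIntegral.norm_integral_le_abs_of_norm_le hb hgint
      have hcomp : (∫ τ in ts..θ, C * (τ - ts)) = C * ((θ - ts)^2 / 2) := by
        rw [intervalIntegral.integral_const_mul]
        congr 1
        have h2 : (∫ τ in ts..θ, (fun y : ℝ => y) (τ - ts)) = ∫ y in ts - ts..θ - ts, y :=
          intervalIntegral.integral_comp_sub_right (fun y : ℝ => y) ts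
        simpa [integral_id] using h2
      rw [hcomp, abs_of_nonneg (by positivity : (0:ℝ) ≤ C * ((θ - ts)^2 / 2))] at h
      linarith
    -- outer integral bound
    have hK : ‖∫ θ in ts..te, u i (ω₁ * θ) •
          ∫ τ in ts..θ, u j (ω₁ * τ) • ∫ σ in ts..τ, Lft j i σ (x σ)‖
        ≤ C * (te - ts)^3 / 6 := by
      have hgint : IntervalIntegrable (fun θ => C * (θ - ts)^2 / 2) volume ts te :=
        ((continuous_const.mul ((continuous_id.sub continuous_const).pow 2)).div_const 2).intervalIntegrable ts te
      have hb : ∀ᵐ θ ∂volume.restrict (Set.uIoc ts te),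
          ‖u i (ω₁ * θ) • ∫ τ in ts..θ, u j (ω₁ * τ) • ∫ σ in ts..τ, Lft j i σ (x σ)‖
            ≤ C * (θ - ts)^2 / 2 := by
        refine (ae_restrict_iff' measurableSet_uIoc).2 (Filter.Eventually.of_forall ?_)
        intro θ hθ
        rw [Set.uIoc_of_le hste] at hθ
        have hθm : θ ∈ Set.Icc ts te := ⟨hθ.1.le, hθ.2⟩
        rw [norm_smul, Real.norm_eq_abs]
        calc |u i (ω₁ * θ)| * ‖_‖
            ≤ 1 * (C * (θ - ts)^2 / 2) :=
              mul_le_mul (hyp.hubdd i hil _) (hJ θ hθm) (norm_nonneg _) zero_le_one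
          _ = C * (θ - ts)^2 / 2 := one_mul _
      have h := intervalIntegral.norm_integral_le_abs_of_norm_le hb hgint
      have hcomp : (∫ θ in ts..te, C * (θ - ts)^2 / 2) = C * (te - ts)^3 / 6 := by
        have h2 : (∫ θ in ts..te, (fun y : ℝ => C * y^2 / 2) (θ - ts))
            = ∫ y in ts - ts..te - ts, C * y^2 / 2 :=
          intervalIntegral.integral_comp_sub_right (fun y : ℝ => C * y^2 / 2) ts
        simp only [sub_self] at h2
        rw [h2]
        rw [show (fun y : ℝ => C * y^2 / 2) = fun y : ℝ => (C/2) * y^2 by funext y; ring]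
        rw [intervalIntegral.integral_const_mul, integral_pow]
        ring
      have hnn : (0:ℝ) ≤ C * (te - ts)^3 / 6 := by
        have h3 : (0:ℝ) ≤ te - ts := by linarith
        positivity
      rw [hcomp, abs_of_nonneg hnn] at h
      exact h
    -- combine with the rpow factor
    have hppj : p i + p j ≤ 2 * p' := by
      have h1 : p i ≤ p' := hp'ub i hi.1 hil
      have h2 : p j ≤ p' := by
        rcases Nat.eq_zero_or_pos j with hj0 | hj0
        · rw [hj0, hyp.hp0]; linarith
        · exact hp'ub j hj0 hjl
      linarith
    have hrpow1 : ω₁ ^ (p i + p j) ≤ ω₁ ^ (p' + 1) := by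
      refine Real.rpow_le_rpow_of_exponent_le hω₁ (by linarith)
    have hC3 : C * (te - ts)^3 / 6 ≤ C * (2 * π / ω₁)^3 / 6 := by
      have h3 : (te - ts)^3 ≤ (2 * π / ω₁)^3 :=
        pow_le_pow_left₀ (by linarith [hste] : (0:ℝ) ≤ te - ts) hteT 3
      have := mul_le_mul_of_nonneg_left h3 hC0
      linarith
    rw [norm_smul, Real.norm_eq_abs, abs_of_pos (Real.rpow_pos_of_pos hω0 _)]
    calc ω₁ ^ (p i + p j) * ‖_‖
        ≤ ω₁ ^ (p' + 1) * (C * (2 * π / ω₁)^3 / 6) := by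
          refine mul_le_mul hrpow1 (le_trans hK hC3) (norm_nonneg _)
            (le_of_lt (Real.rpow_pos_of_pos hω0 _))
      _ = B := by
          have hsplit : ω₁ ^ (p' + 1) = ω₁ ^ (p' - 2) * ω₁ ^ (3:ℕ) := by
            rw [← Real.rpow_natCast ω₁ 3, ← Real.rpow_add hω0]
            congr 1
            push_cast
            ring
          rw [hsplit, hBdef]
          have hω3 : ω₁ ^ (3:ℕ) ≠ 0 := pow_ne_zero _ (ne_of_gt hω0)
          field_simp
          ring
  -- sum up
  have hsum : ‖QV2 l Lft u p ω₁ x ts te‖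
      ≤ ((l - 1 : ℕ) : ℝ) * ((l + 1 : ℕ) : ℝ) * B := by
    rw [QV2]
    refine le_trans (norm_sum_le _ _) ?_
    refine le_trans (Finset.sum_le_sum fun i hi =>
      le_trans (norm_sum_le _ _) (Finset.sum_le_sum fun j hj => key i hi j hj)) ?_
    simp only [Finset.sum_const, Nat.card_Icc, Nat.card_Ico, nsmul_eq_mul]
    push_cast
    ring_nf
    exact le_refl _
  have hcard : ((l - 1 : ℕ) : ℝ) * ((l + 1 : ℕ) : ℝ) ≤ (l : ℝ)^2 := by
    have : (l - 1) * (l + 1) ≤ l * l := by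
      cases l with
      | zero => simp
      | succ m => simp only [Nat.succ_sub_one]; nlinarith
    calc ((l - 1 : ℕ) : ℝ) * ((l + 1 : ℕ) : ℝ) = (((l-1)*(l+1) : ℕ) : ℝ) := by
          push_cast [Nat.cast_mul]; ring
      _ ≤ ((l * l : ℕ) : ℝ) := Nat.cast_le.2 this
      _ = (l : ℝ)^2 := by push_cast; ring
  have hfinal : (l : ℝ)^2 * B
      = (2/3) * π ^ 2 * l ^ 2 * L * Λ₁ * ‖x₀‖ * ω₁ ^ (p' - 1) * (2 * π / ω₁) := by
    have hsplit : ω₁ ^ (p' - 1) = ω₁ ^ (p' - 2) * ω₁ := by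
      rw [show p' - 1 = (p' - 2) + 1 by ring, Real.rpow_add hω0, Real.rpow_one]
    rw [hsplit, hBdef, hCdef]
    field_simp
    ring
  calc ‖QV2 l Lft u p ω₁ x ts te‖
      ≤ ((l - 1 : ℕ) : ℝ) * ((l + 1 : ℕ) : ℝ) * B := hsum
    _ ≤ (l : ℝ)^2 * B := mul_le_mul_of_nonneg_right hcard hB0
    _ = _ := hfinal
end

section
/- Bound on Q_1: Under the setup assumptions, define Q_1(t_s, t_e) := ∑_{i=1}^l L_{f₀}f_i(t_s, x(t_s)) V_{i0}(t_s, t_e), where V_i(t_s, t_e) := ∫_{t_s}^{t_e} ω₁^{p_i} u_i(ω₁θ) dθ and V_{i0}(t_s, t_e) := ∫_{t_s}^{t_e} ω₁^{p_i} u_i(ω₁θ) V_0(t_s, θ) dθ with u₀ := 1 and p₀ := 0. Then ‖Q_1(t_s, t_e)‖ ≤ π l L Λ₁ ‖x₀‖ ω₁^{p′−1} T₁. -/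
open MeasureTheory Real Filter

/-- **Bound on `Q_1`** (Lemma 10). -/
theorem bound_Q1
    {n : ℕ} (l : ℕ)
    (f : ℕ → ℝ → E n → E n)
    (Df : ℕ → ℝ → E n → (E n →L[ℝ] E n))
    (ft : ℕ → ℝ → E n → E n)
    (Lft : ℕ → ℕ → ℝ → E n → E n)
    (DLf : ℕ → ℕ → ℝ → E n → (E n →L[ℝ] E n))
    (u : ℕ → ℝ → ℝ) (p : ℕ → ℝ) (L : ℝ)
    (hyp : Hyps l f Df ft Lft DLf u p L)
    -- setup: a bounded solution of (S) with frequency `ω₁ ≥ 1` on `[t₀, t₁]`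
    (t₀ t₁ ω₁ Λ₁ : ℝ) (x₀ : E n) (x : ℝ → E n)
    (h01 : t₀ < t₁) (hω₁ : 1 ≤ ω₁) (hΛ₁ : 1 ≤ Λ₁)
    (hx0 : x t₀ = x₀)
    (hsol : IsSSol l f u p ω₁ x (Set.Icc t₀ t₁) t₀)
    (hxb : ∀ t ∈ Set.Icc t₀ t₁, ‖x t‖ ≤ Λ₁ * ‖x₀‖)
    -- `p′ = max_{1 ≤ i ≤ l} p i`
    (p' : ℝ)
    (hp'ub : ∀ i, 1 ≤ i → i ≤ l → p i ≤ p')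
    (hp'mem : ∃ i, 1 ≤ i ∧ i ≤ l ∧ p i = p')
    -- `t_s ∈ [t₀, t_r]` and `t_e ∈ [t_s, min (t_s + T₁) t₁]`, where `T₁ = 2π/ω₁`
    (ts te : ℝ)
    (hts : ts ∈ Set.Icc t₀ (t₀ + (⌊(t₁ - t₀) / (2 * π / ω₁)⌋₊ : ℝ) * (2 * π / ω₁)))
    (hte : te ∈ Set.Icc ts (min (ts + 2 * π / ω₁) t₁)) :
    ‖Q1 l f Df u p ω₁ x ts te‖
      ≤ π * l * L * Λ₁ * ‖x₀‖ * ω₁ ^ (p' - 1) * (2 * π / ω₁) := by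
  have hω₁pos : (0:ℝ) < ω₁ := lt_of_lt_of_le one_pos hω₁
  have hπ : (0:ℝ) < π := Real.pi_pos
  set T₁ : ℝ := 2 * π / ω₁ with hT₁def
  have hT₁pos : 0 < T₁ := by positivity
  have hste : ts ≤ te := hte.1
  have hteT : te - ts ≤ T₁ := by
    have := le_trans hte.2 (min_le_left _ _)
    linarith
  have ht0ts : t₀ ≤ ts := hts.1
  have hts1 : ts ≤ t₁ := by
    have hr : ((⌊(t₁ - t₀) / T₁⌋₊ : ℝ)) ≤ (t₁ - t₀) / T₁ :=
      Nat.floor_le (div_nonneg (by linarith) hT₁pos.le)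
    have : ((⌊(t₁ - t₀) / T₁⌋₊ : ℝ)) * T₁ ≤ t₁ - t₀ :=
      (le_div_iff₀ hT₁pos).mp hr
    have := hts.2
    linarith
  have hxts : ‖x ts‖ ≤ Λ₁ * ‖x₀‖ := hxb ts ⟨ht0ts, hts1⟩
  have hx0n : (0:ℝ) ≤ ‖x₀‖ := norm_nonneg _
  have hLΛ : (0:ℝ) ≤ L * (Λ₁ * ‖x₀‖) := mul_nonneg hyp.hLpos.le (by positivity)
  -- per-term bound
  have hterm : ∀ i ∈ Finset.Icc 1 l,
      ‖Vij u p ω₁ i 0 ts te • lieDeriv f Df 0 i ts (x ts)‖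
        ≤ (ω₁ ^ p' * ((te - ts) ^ 2 / 2)) * (L * (Λ₁ * ‖x₀‖)) := by
    intro i hi
    rw [Finset.mem_Icc] at hi
    have hi1 := hi.1
    have hil := hi.2
    -- Vi for index 0 is θ - ts
    have hVi0 : ∀ θ : ℝ, Vi u p ω₁ 0 ts θ = θ - ts := by
      intro θ
      unfold Vi
      simp [hyp.hp0, hyp.hu0, Real.rpow_zero]
    -- bound on the Lie derivative
    have hreg := hyp.hreg_Lf i 0 hil (Nat.zero_le l)
    have hLd : ‖lieDeriv f Df 0 i ts (x ts)‖ ≤ L * (Λ₁ * ‖x₀‖) := by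
      have h1 : ‖lieDeriv f Df 0 i ts (x ts) - lieDeriv f Df 0 i ts 0‖
          ≤ L * ‖x ts - 0‖ := hreg.2.1 ts (x ts) 0
      rw [hreg.2.2 ts, sub_zero, sub_zero] at h1
      calc ‖lieDeriv f Df 0 i ts (x ts)‖ ≤ L * ‖x ts‖ := h1
        _ ≤ L * (Λ₁ * ‖x₀‖) := by
            exact mul_le_mul_of_nonneg_left hxts hyp.hLpos.le
    -- bound on Vij
    have hVij : |Vij u p ω₁ i 0 ts te| ≤ ω₁ ^ p' * ((te - ts) ^ 2 / 2) := by
      have hg : IntervalIntegrable (fun θ : ℝ => ω₁ ^ p' * (θ - ts))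
          MeasureTheory.volume ts te :=
        (Continuous.intervalIntegrable (by continuity) _ _)
      have hae : ∀ᵐ θ ∂(MeasureTheory.volume.restrict (Set.uIoc ts te)),
          ‖(ω₁ ^ p i * u i (ω₁ * θ)) * Vi u p ω₁ 0 ts θ‖
            ≤ ω₁ ^ p' * (θ - ts) := by
        refine MeasureTheory.ae_restrict_of_forall_mem measurableSet_uIoc ?_
        intro θ hθ
        rw [Set.uIoc_of_le hste] at hθ
        have h1 : (0:ℝ) ≤ θ - ts := by linarith [hθ.1.le]
        rw [hVi0 θ, Real.norm_eq_abs, abs_mul, abs_mul]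
        have h2 : |ω₁ ^ p i| = ω₁ ^ p i := abs_of_nonneg (Real.rpow_nonneg hω₁pos.le _)
        have h3 : |θ - ts| = θ - ts := abs_of_nonneg h1
        rw [h2, h3]
        have h4 : ω₁ ^ p i ≤ ω₁ ^ p' :=
          Real.rpow_le_rpow_of_exponent_le hω₁ (hp'ub i hi1 hil)
        have h5 : |u i (ω₁ * θ)| ≤ 1 := hyp.hubdd i hil _
        calc ω₁ ^ p i * |u i (ω₁ * θ)| * (θ - ts)
            ≤ ω₁ ^ p' * 1 * (θ - ts) := by
              apply mul_le_mul_of_nonneg_right _ h1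
              exact mul_le_mul h4 h5 (abs_nonneg _) (Real.rpow_nonneg hω₁pos.le _)
          _ = ω₁ ^ p' * (θ - ts) := by ring
      have hkey := intervalIntegral.norm_integral_le_abs_of_norm_le hae hg
      have hInt : (∫ θ in ts..te, ω₁ ^ p' * (θ - ts))
          = ω₁ ^ p' * ((te - ts) ^ 2 / 2) := by
        rw [intervalIntegral.integral_const_mul]
        have : (∫ θ in ts..te, (θ - ts)) = (te - ts) ^ 2 / 2 := by
          have := intervalIntegral.integral_comp_sub_right (a := ts) (b := te)
            (fun x : ℝ => x) ts
          rw [this, sub_self, integral_id]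
          ring
        rw [this]
      unfold Vij
      rw [Real.norm_eq_abs] at hkey
      calc |∫ θ in ts..te, (ω₁ ^ p i * u i (ω₁ * θ)) * Vi u p ω₁ 0 ts θ|
          ≤ |∫ θ in ts..te, ω₁ ^ p' * (θ - ts)| := hkey
        _ = ω₁ ^ p' * ((te - ts) ^ 2 / 2) := by
            rw [hInt]; exact abs_of_nonneg (by positivity)
    rw [norm_smul, Real.norm_eq_abs]
    exact mul_le_mul hVij hLd (norm_nonneg _) (by positivity)
  -- sum up
  have hsum : ‖Q1 l f Df u p ω₁ x ts te‖
      ≤ (l : ℝ) * ((ω₁ ^ p' * ((te - ts) ^ 2 / 2)) * (L * (Λ₁ * ‖x₀‖))) := by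
    unfold Q1
    calc ‖∑ i ∈ Finset.Icc 1 l, Vij u p ω₁ i 0 ts te • lieDeriv f Df 0 i ts (x ts)‖
        ≤ ∑ i ∈ Finset.Icc 1 l,
            ‖Vij u p ω₁ i 0 ts te • lieDeriv f Df 0 i ts (x ts)‖ :=
          norm_sum_le _ _
      _ ≤ ∑ _i ∈ Finset.Icc 1 l,
            (ω₁ ^ p' * ((te - ts) ^ 2 / 2)) * (L * (Λ₁ * ‖x₀‖)) :=
          Finset.sum_le_sum hterm
      _ = (l : ℝ) * ((ω₁ ^ p' * ((te - ts) ^ 2 / 2)) * (L * (Λ₁ * ‖x₀‖))) := by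
          rw [Finset.sum_const, Nat.card_Icc]
          simp [nsmul_eq_mul]
  -- replace (te - ts)^2 by T₁^2 and finish with algebra
  have hmono : (te - ts) ^ 2 ≤ T₁ ^ 2 := by
    apply sq_le_sq' _ hteT
    linarith
  have hsum2 : ‖Q1 l f Df u p ω₁ x ts te‖
      ≤ (l : ℝ) * ((ω₁ ^ p' * (T₁ ^ 2 / 2)) * (L * (Λ₁ * ‖x₀‖))) := by
    refine le_trans hsum ?_
    apply mul_le_mul_of_nonneg_left _ (Nat.cast_nonneg l)
    apply mul_le_mul_of_nonneg_right _ hLΛ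
    apply mul_le_mul_of_nonneg_left _ (Real.rpow_nonneg hω₁pos.le _)
    linarith
  refine le_trans hsum2 (le_of_eq ?_)
  have hrpow : ω₁ ^ (p' - 1) = ω₁ ^ p' / ω₁ := by
    rw [Real.rpow_sub hω₁pos, Real.rpow_one]
  rw [hrpow, hT₁def]
  field_simp
end

section
/- Bound on Q_{1T}: Under the setup assumptions, define Q_{1T}(t_s, t_e) := ∑_{1≤i<j≤l} L_{f_j}f_i(t_s, x(t_s)) V_i(t_s, t_e) V_j(t_s, t_e) + (1/2) ∑_{i=1}^l L_{f_i}f_i(t_s, x(t_s)) V_i(t_s, t_e)², where V_i(t_s, t_e) := ∫_{t_s}^{t_e} ω₁^{p_i} u_i(ω₁θ) dθ. Then ‖Q_{1T}(t_s, t_e)‖ ≤ 2π² l² L Λ₁ ‖x₀‖ ω₁^{p′−1}. -/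
open MeasureTheory Real Filter

/-- **Bound on `Q_{1T}`** (Lemma 9). -/
theorem bound_Q1T
    {n : ℕ} (l : ℕ)
    (f : ℕ → ℝ → E n → E n)
    (Df : ℕ → ℝ → E n → (E n →L[ℝ] E n))
    (ft : ℕ → ℝ → E n → E n)
    (Lft : ℕ → ℕ → ℝ → E n → E n)
    (DLf : ℕ → ℕ → ℝ → E n → (E n →L[ℝ] E n))
    (u : ℕ → ℝ → ℝ) (p : ℕ → ℝ) (L : ℝ)
    (hyp : Hyps l f Df ft Lft DLf u p L)
    -- setup: a bounded solution of (S) with frequency `ω₁ ≥ 1` on `[t₀, t₁]`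
    (t₀ t₁ ω₁ Λ₁ : ℝ) (x₀ : E n) (x : ℝ → E n)
    (h01 : t₀ < t₁) (hω₁ : 1 ≤ ω₁) (hΛ₁ : 1 ≤ Λ₁)
    (hx0 : x t₀ = x₀)
    (hsol : IsSSol l f u p ω₁ x (Set.Icc t₀ t₁) t₀)
    (hxb : ∀ t ∈ Set.Icc t₀ t₁, ‖x t‖ ≤ Λ₁ * ‖x₀‖)
    -- `p′ = max_{1 ≤ i ≤ l} p i`
    (p' : ℝ)
    (hp'ub : ∀ i, 1 ≤ i → i ≤ l → p i ≤ p')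
    (hp'mem : ∃ i, 1 ≤ i ∧ i ≤ l ∧ p i = p')
    -- `t_s ∈ [t₀, t_r]` and `t_e ∈ [t_s, min (t_s + T₁) t₁]`, where `T₁ = 2π/ω₁`
    (ts te : ℝ)
    (hts : ts ∈ Set.Icc t₀ (t₀ + (⌊(t₁ - t₀) / (2 * π / ω₁)⌋₊ : ℝ) * (2 * π / ω₁)))
    (hte : te ∈ Set.Icc ts (min (ts + 2 * π / ω₁) t₁)) :
    ‖Q1T l f Df u p ω₁ x ts te‖
      ≤ 2 * π ^ 2 * l ^ 2 * L * Λ₁ * ‖x₀‖ * ω₁ ^ (p' - 1) := by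
  have hπ := Real.pi_pos
  have hω0 : (0:ℝ) < ω₁ := lt_of_lt_of_le one_pos hω₁
  have hT0 : (0:ℝ) < 2 * π / ω₁ := by positivity
  have hts0 : t₀ ≤ ts := hts.1
  have htr : (⌊(t₁ - t₀) / (2 * π / ω₁)⌋₊ : ℝ) * (2 * π / ω₁) ≤ t₁ - t₀ := by
    have h1 : (⌊(t₁ - t₀) / (2 * π / ω₁)⌋₊ : ℝ) ≤ (t₁ - t₀) / (2 * π / ω₁) :=
      Nat.floor_le (div_nonneg (by linarith) hT0.le)
    calc (⌊(t₁ - t₀) / (2 * π / ω₁)⌋₊ : ℝ) * (2 * π / ω₁)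
        ≤ (t₁ - t₀) / (2 * π / ω₁) * (2 * π / ω₁) := by nlinarith
      _ = t₁ - t₀ := div_mul_cancel₀ _ (ne_of_gt hT0)
  have hts1 : ts ≤ t₁ := le_trans hts.2 (by linarith)
  have hte0 : ts ≤ te := hte.1
  have hteT : te - ts ≤ 2 * π / ω₁ := by
    have := le_trans hte.2 (min_le_left _ _); linarith
  have hxts : ‖x ts‖ ≤ Λ₁ * ‖x₀‖ := hxb ts ⟨hts0, hts1⟩
  have hx0n : (0:ℝ) ≤ Λ₁ * ‖x₀‖ := le_trans (norm_nonneg _) hxts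
  obtain ⟨i₀, hi₀1, hi₀l, hpi₀⟩ := hp'mem
  have hp'lt : p' < 1 := hpi₀ ▸ (hyp.hp i₀ hi₀1 hi₀l).2
  -- bound on |V_i|
  have hVb : ∀ i, 1 ≤ i → i ≤ l → |Vi u p ω₁ i ts te| ≤ 2 * π * ω₁ ^ (p i - 1) := by
    intro i h1 hl
    have h1' : ‖∫ θ in ts..te, ω₁ ^ p i * u i (ω₁ * θ)‖ ≤ ω₁ ^ p i * |te - ts| := by
      apply intervalIntegral.norm_integral_le_of_norm_le_const
      intro θ _
      rw [Real.norm_eq_abs, abs_mul, abs_of_nonneg (Real.rpow_nonneg hω0.le _)]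
      exact mul_le_of_le_one_right (Real.rpow_nonneg hω0.le _) (hyp.hubdd i hl _)
    have h2 : |Vi u p ω₁ i ts te| ≤ ω₁ ^ p i * |te - ts| := h1'
    calc |Vi u p ω₁ i ts te| ≤ ω₁ ^ p i * |te - ts| := h2
      _ ≤ ω₁ ^ p i * (2 * π / ω₁) := by
          apply mul_le_mul_of_nonneg_left _ (Real.rpow_nonneg hω0.le _)
          rw [abs_of_nonneg (by linarith)]; exact hteT
      _ = 2 * π * ω₁ ^ (p i - 1) := by
          rw [Real.rpow_sub hω0, Real.rpow_one]; ring
  -- product bound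
  have hVVb : ∀ i j, 1 ≤ i → i ≤ l → 1 ≤ j → j ≤ l →
      |Vi u p ω₁ i ts te * Vi u p ω₁ j ts te| ≤ 4 * π ^ 2 * ω₁ ^ (p' - 1) := by
    intro i j hi1 hil hj1 hjl
    rw [abs_mul]
    calc |Vi u p ω₁ i ts te| * |Vi u p ω₁ j ts te|
        ≤ (2 * π * ω₁ ^ (p i - 1)) * (2 * π * ω₁ ^ (p j - 1)) :=
          mul_le_mul (hVb i hi1 hil) (hVb j hj1 hjl) (abs_nonneg _) (by positivity)
      _ = 4 * π ^ 2 * ω₁ ^ ((p i - 1) + (p j - 1)) := by rw [Real.rpow_add hω0]; ring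
      _ ≤ 4 * π ^ 2 * ω₁ ^ (p' - 1) := by
          apply mul_le_mul_of_nonneg_left _ (by positivity)
          apply Real.rpow_le_rpow_of_exponent_le hω₁
          have h1 := hp'ub i hi1 hil; have h2 := hp'ub j hj1 hjl; linarith
  -- Lie derivative bound
  have hLd : ∀ i j, i ≤ l → j ≤ l → ‖lieDeriv f Df j i ts (x ts)‖ ≤ L * (Λ₁ * ‖x₀‖) := by
    intro i j hil hjl
    obtain ⟨_, hlip, hz⟩ := hyp.hreg_Lf i j hil hjl
    have h := hlip ts (x ts) 0
    rw [hz, sub_zero, sub_zero] at h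
    exact le_trans h (mul_le_mul_of_nonneg_left hxts hyp.hLpos.le)
  set B : ℝ := 4 * π ^ 2 * ω₁ ^ (p' - 1) * (L * (Λ₁ * ‖x₀‖)) with hB
  have hB0 : 0 ≤ B :=
    mul_nonneg (by positivity) (mul_nonneg hyp.hLpos.le hx0n)
  -- per-term bounds
  have hterm : ∀ i j, 1 ≤ i → i ≤ l → 1 ≤ j → j ≤ l →
      ‖(Vi u p ω₁ i ts te * Vi u p ω₁ j ts te) • lieDeriv f Df j i ts (x ts)‖ ≤ B := by
    intro i j hi1 hil hj1 hjl
    rw [norm_smul, Real.norm_eq_abs]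
    exact mul_le_mul (hVVb i j hi1 hil hj1 hjl) (hLd i j hil hjl) (norm_nonneg _)
      (by positivity)
  -- first double sum
  have hsum1 : ‖∑ i ∈ Finset.Icc 1 l, ∑ j ∈ Finset.Ioc i l,
      (Vi u p ω₁ i ts te * Vi u p ω₁ j ts te) • lieDeriv f Df j i ts (x ts)‖
      ≤ (∑ i ∈ Finset.Icc 1 l, ((Finset.Ioc i l).card : ℝ)) * B := by
    calc ‖∑ i ∈ Finset.Icc 1 l, ∑ j ∈ Finset.Ioc i l,
        (Vi u p ω₁ i ts te * Vi u p ω₁ j ts te) • lieDeriv f Df j i ts (x ts)‖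
        ≤ ∑ i ∈ Finset.Icc 1 l, ‖∑ j ∈ Finset.Ioc i l,
            (Vi u p ω₁ i ts te * Vi u p ω₁ j ts te) • lieDeriv f Df j i ts (x ts)‖ :=
          norm_sum_le _ _
      _ ≤ ∑ i ∈ Finset.Icc 1 l, ((Finset.Ioc i l).card : ℝ) * B := by
          apply Finset.sum_le_sum
          intro i hi
          rw [Finset.mem_Icc] at hi
          calc ‖∑ j ∈ Finset.Ioc i l,
              (Vi u p ω₁ i ts te * Vi u p ω₁ j ts te) • lieDeriv f Df j i ts (x ts)‖
              ≤ ∑ j ∈ Finset.Ioc i l, ‖(Vi u p ω₁ i ts te * Vi u p ω₁ j ts te) •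
                  lieDeriv f Df j i ts (x ts)‖ := norm_sum_le _ _
            _ ≤ ∑ _j ∈ Finset.Ioc i l, B := by
                apply Finset.sum_le_sum
                intro j hj
                rw [Finset.mem_Ioc] at hj
                exact hterm i j hi.1 hi.2 (le_trans hi.1 hj.1.le) hj.2
            _ = ((Finset.Ioc i l).card : ℝ) * B := by
                rw [Finset.sum_const, nsmul_eq_mul]
      _ = (∑ i ∈ Finset.Icc 1 l, ((Finset.Ioc i l).card : ℝ)) * B := by
          rw [Finset.sum_mul]
  -- second sum
  have hsum2 : ‖∑ i ∈ Finset.Icc 1 l,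
      ((Vi u p ω₁ i ts te) ^ 2) • lieDeriv f Df i i ts (x ts)‖ ≤ (l : ℝ) * B := by
    calc ‖∑ i ∈ Finset.Icc 1 l, ((Vi u p ω₁ i ts te) ^ 2) • lieDeriv f Df i i ts (x ts)‖
        ≤ ∑ i ∈ Finset.Icc 1 l, ‖((Vi u p ω₁ i ts te) ^ 2) •
            lieDeriv f Df i i ts (x ts)‖ := norm_sum_le _ _
      _ ≤ ∑ _i ∈ Finset.Icc 1 l, B := by
          apply Finset.sum_le_sum
          intro i hi
          rw [Finset.mem_Icc] at hi
          have := hterm i i hi.1 hi.2 hi.1 hi.2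
          rw [← sq] at this
          exact this
      _ ≤ (l : ℝ) * B := by
          rw [Finset.sum_const, nsmul_eq_mul]
          have : ((Finset.Icc 1 l).card : ℝ) ≤ (l : ℝ) := by
            rw [Nat.card_Icc]; simp
          exact mul_le_mul_of_nonneg_right this hB0
  -- counting lemma
  have hcount : (∑ i ∈ Finset.Icc 1 l, ((Finset.Ioc i l).card : ℝ)) * 2 + (l : ℝ)
      = (l : ℝ) ^ 2 := by
    have hnat : (∑ i ∈ Finset.Icc 1 l, (Finset.Ioc i l).card) * 2 + l = l * l := by
      have h1 : ∀ i ∈ Finset.Icc 1 l, (Finset.Ioc i l).card = l - i := by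
        intro i _; rw [Nat.card_Ioc]
      rw [Finset.sum_congr rfl h1]
      have h2 : ∑ i ∈ Finset.Icc 1 l, (l - i) = ∑ j ∈ Finset.range l, j := by
        have : Finset.Icc 1 l = Finset.Ico 1 (l + 1) := by
          rw [Finset.Ico_add_one_right_eq_Icc]
        rw [this, Finset.sum_Ico_eq_sum_range]
        simp only [Nat.add_sub_cancel]
        rw [← Finset.sum_range_reflect]
        apply Finset.sum_congr rfl
        intro j hj
        rw [Finset.mem_range] at hj
        omega
      rw [h2, Finset.sum_range_id_mul_two]
      cases l with
      | zero => simp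
      | succ m => simp [Nat.succ_sub_one]; ring
    have := congrArg (fun k : ℕ => (k : ℝ)) hnat
    push_cast at this
    linarith [this]
  -- assemble
  have key : ‖Q1T l f Df u p ω₁ x ts te‖
      ≤ (∑ i ∈ Finset.Icc 1 l, ((Finset.Ioc i l).card : ℝ)) * B + (1/2 : ℝ) * ((l : ℝ) * B) := by
    unfold Q1T
    refine le_trans (norm_add_le _ _) (add_le_add hsum1 ?_)
    rw [norm_smul, Real.norm_eq_abs, abs_of_nonneg (by norm_num : (0:ℝ) ≤ 1/2)]
    exact mul_le_mul_of_nonneg_left hsum2 (by norm_num)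
  refine le_trans key ?_
  have hfin : (∑ i ∈ Finset.Icc 1 l, ((Finset.Ioc i l).card : ℝ)) * B
      + (1/2 : ℝ) * ((l : ℝ) * B) = ((l : ℝ) ^ 2 / 2) * B := by
    nlinarith [hcount]
  rw [hfin, hB]
  exact le_of_eq (by ring)
end

section
/- Bound on H: Under the setup assumptions, define H(t_s, t_e) := ∑_{i=1}^l f_i(t_s, x(t_s)) V_i(t_s, t_e) + ∑_{1≤i<j≤l} [f_i, f_j](t_s, x(t_s)) V_{ji}(t_s, t_e), where V_i(t_s, t_e) := ∫_{t_s}^{t_e} ω₁^{p_i} u_i(ω₁θ) dθ and V_{ji}(t_s, t_e) := ∫_{t_s}^{t_e} ω₁^{p_j} u_j(ω₁θ) V_i(t_s, θ) dθ. Then ‖H(t_s, t_e)‖ ≤ 8π² l² L Λ₁ ‖x₀‖ ω₁^{p′−1}. -/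
open MeasureTheory Real Filter

/-- **Bound on `H`** (Lemma 11). -/
theorem bound_H
    {n : ℕ} (l : ℕ)
    (f : ℕ → ℝ → E n → E n)
    (Df : ℕ → ℝ → E n → (E n →L[ℝ] E n))
    (ft : ℕ → ℝ → E n → E n)
    (Lft : ℕ → ℕ → ℝ → E n → E n)
    (DLf : ℕ → ℕ → ℝ → E n → (E n →L[ℝ] E n))
    (u : ℕ → ℝ → ℝ) (p : ℕ → ℝ) (L : ℝ)
    (hyp : Hyps l f Df ft Lft DLf u p L)
    -- setup: a bounded solution of (S) with frequency `ω₁ ≥ 1` on `[t₀, t₁]`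
    (t₀ t₁ ω₁ Λ₁ : ℝ) (x₀ : E n) (x : ℝ → E n)
    (h01 : t₀ < t₁) (hω₁ : 1 ≤ ω₁) (hΛ₁ : 1 ≤ Λ₁)
    (hx0 : x t₀ = x₀)
    (hsol : IsSSol l f u p ω₁ x (Set.Icc t₀ t₁) t₀)
    (hxb : ∀ t ∈ Set.Icc t₀ t₁, ‖x t‖ ≤ Λ₁ * ‖x₀‖)
    -- `p′ = max_{1 ≤ i ≤ l} p i`
    (p' : ℝ)
    (hp'ub : ∀ i, 1 ≤ i → i ≤ l → p i ≤ p')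
    (hp'mem : ∃ i, 1 ≤ i ∧ i ≤ l ∧ p i = p')
    -- `t_s ∈ [t₀, t_r]` and `t_e ∈ [t_s, min (t_s + T₁) t₁]`, where `T₁ = 2π/ω₁`
    (ts te : ℝ)
    (hts : ts ∈ Set.Icc t₀ (t₀ + (⌊(t₁ - t₀) / (2 * π / ω₁)⌋₊ : ℝ) * (2 * π / ω₁)))
    (hte : te ∈ Set.Icc ts (min (ts + 2 * π / ω₁) t₁)) :
    ‖Hterm l f Df u p ω₁ x ts te‖
      ≤ 8 * π ^ 2 * l ^ 2 * L * Λ₁ * ‖x₀‖ * ω₁ ^ (p' - 1) := by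
  obtain ⟨i0, hi01, hi0l, hpi0⟩ := hp'mem
  have hl1 : 1 ≤ l := le_trans hi01 hi0l
  have hπ3 : (3:ℝ) < π := Real.pi_gt_three
  have hπ0 : (0:ℝ) < π := Real.pi_pos
  have hω0 : (0:ℝ) < ω₁ := lt_of_lt_of_le one_pos hω₁
  have hp'lt : p' < 1 := hpi0 ▸ (hyp.hp i0 hi01 hi0l).2
  set W : ℝ := ω₁ ^ (p' - 1) with hWdef
  have hW0 : (0:ℝ) < W := Real.rpow_pos_of_pos hω0 _
  set M : ℝ := L * (Λ₁ * ‖x₀‖) with hMdef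
  have hM0 : (0:ℝ) ≤ M := by
    have hL := hyp.hLpos
    have : (0:ℝ) ≤ Λ₁ * ‖x₀‖ := mul_nonneg (by linarith) (norm_nonneg _)
    rw [hMdef]; nlinarith
  have hmono : ∀ a b : ℝ, a ≤ b → ω₁ ^ a ≤ ω₁ ^ b := fun a b h =>
    Real.rpow_le_rpow_of_exponent_le hω₁ h
  -- time facts
  have htste : ts ≤ te := hte.1
  have hT0 : (0:ℝ) ≤ te - ts := sub_nonneg.2 htste
  have hTle : te - ts ≤ 2 * π / ω₁ := by
    have h1 : te ≤ ts + 2 * π / ω₁ := le_trans hte.2 (min_le_left _ _)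
    linarith
  have hts0 : t₀ ≤ ts := hts.1
  have hts1 : ts ≤ t₁ := by
    have hpos : (0:ℝ) < 2 * π / ω₁ := div_pos (by positivity) hω0
    have h2 : (⌊(t₁ - t₀) / (2 * π / ω₁)⌋₊ : ℝ) ≤ (t₁ - t₀) / (2 * π / ω₁) :=
      Nat.floor_le (div_nonneg (by linarith) hpos.le)
    have h3 : (⌊(t₁ - t₀) / (2 * π / ω₁)⌋₊ : ℝ) * (2 * π / ω₁) ≤ t₁ - t₀ := by
      have := mul_le_mul_of_nonneg_right h2 hpos.le
      rwa [div_mul_cancel₀ _ hpos.ne'] at this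
    have := hts.2
    linarith
  have hxts : ‖x ts‖ ≤ Λ₁ * ‖x₀‖ := hxb ts ⟨hts0, hts1⟩
  -- bound on regular vector fields at (ts, x ts)
  have hnormg : ∀ g : ℝ → E n → E n, RegVF L g → ‖g ts (x ts)‖ ≤ M := by
    intro g hg
    obtain ⟨-, hlip, hz⟩ := hg
    have h1 : ‖g ts (x ts)‖ ≤ L * ‖x ts‖ := by
      have := hlip ts (x ts) 0
      simpa [hz ts] using this
    calc ‖g ts (x ts)‖ ≤ L * ‖x ts‖ := h1
      _ ≤ M := mul_le_mul_of_nonneg_left hxts hyp.hLpos.le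
  -- pointwise bound on the dithered integrand
  have hptw : ∀ i, i ≤ l → ∀ t : ℝ, ‖ω₁ ^ p i * u i (ω₁ * t)‖ ≤ ω₁ ^ p i := by
    intro i hil t
    have hpi0' : (0:ℝ) < ω₁ ^ p i := Real.rpow_pos_of_pos hω0 _
    rw [norm_mul, Real.norm_eq_abs, Real.norm_eq_abs, abs_of_pos hpi0']
    calc ω₁ ^ p i * |u i (ω₁ * t)| ≤ ω₁ ^ p i * 1 :=
          mul_le_mul_of_nonneg_left (hyp.hubdd i hil (ω₁ * t)) hpi0'.le
      _ = ω₁ ^ p i := mul_one _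
  -- bound for Vi
  have hVi : ∀ i, i ≤ l → ∀ θ, ts ≤ θ → θ ≤ te →
      |Vi u p ω₁ i ts θ| ≤ ω₁ ^ p i * (te - ts) := by
    intro i hil θ h1 h2
    have h0 := intervalIntegral.norm_integral_le_of_norm_le_const
      (C := ω₁ ^ p i) (a := ts) (b := θ)
      (f := fun t => ω₁ ^ p i * u i (ω₁ * t)) (fun t _ => hptw i hil t)
    rw [Real.norm_eq_abs] at h0
    have hpi0' : (0:ℝ) ≤ ω₁ ^ p i := (Real.rpow_pos_of_pos hω0 _).le
    calc |Vi u p ω₁ i ts θ| ≤ ω₁ ^ p i * |θ - ts| := h0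
      _ = ω₁ ^ p i * (θ - ts) := by rw [abs_of_nonneg (by linarith)]
      _ ≤ ω₁ ^ p i * (te - ts) := mul_le_mul_of_nonneg_left (by linarith) hpi0'
  have hfrac : ∀ i : ℕ, ω₁ ^ (p i - 1) = ω₁ ^ p i / ω₁ := by
    intro i
    rw [Real.rpow_sub hω0, Real.rpow_one]
  -- final Vi bound
  have hVite : ∀ i, 1 ≤ i → i ≤ l → |Vi u p ω₁ i ts te| ≤ 2 * π * W := by
    intro i h1 h2
    have hpi0' : (0:ℝ) ≤ ω₁ ^ p i := (Real.rpow_pos_of_pos hω0 _).le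
    calc |Vi u p ω₁ i ts te| ≤ ω₁ ^ p i * (te - ts) := hVi i h2 te htste le_rfl
      _ ≤ ω₁ ^ p i * (2 * π / ω₁) := mul_le_mul_of_nonneg_left hTle hpi0'
      _ = 2 * π * (ω₁ ^ p i / ω₁) := by ring
      _ = 2 * π * ω₁ ^ (p i - 1) := by rw [hfrac]
      _ ≤ 2 * π * W := by
          have h := hmono (p i - 1) (p' - 1) (by linarith [hp'ub i h1 h2])
          exact mul_le_mul_of_nonneg_left h (by positivity)
  -- final Vij bound
  have hVij : ∀ i j, 1 ≤ i → i ≤ l → 1 ≤ j → j ≤ l →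
      |Vij u p ω₁ j i ts te| ≤ 4 * π ^ 2 * W := by
    intro i j hi1 hil hj1 hjl
    have hpi0' : (0:ℝ) ≤ ω₁ ^ p i := (Real.rpow_pos_of_pos hω0 _).le
    have hpj0' : (0:ℝ) ≤ ω₁ ^ p j := (Real.rpow_pos_of_pos hω0 _).le
    have hb : ∀ θ ∈ Set.uIoc ts te,
        ‖(ω₁ ^ p j * u j (ω₁ * θ)) * Vi u p ω₁ i ts θ‖
          ≤ ω₁ ^ p j * (ω₁ ^ p i * (te - ts)) := by
      intro θ hθ
      rw [Set.uIoc_of_le htste] at hθ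
      rw [norm_mul]
      have hB : ‖Vi u p ω₁ i ts θ‖ ≤ ω₁ ^ p i * (te - ts) := by
        rw [Real.norm_eq_abs]; exact hVi i hil θ hθ.1.le hθ.2
      exact mul_le_mul (hptw j hjl θ) hB (norm_nonneg _) hpj0'
    have h0 := intervalIntegral.norm_integral_le_of_norm_le_const hb
    rw [Real.norm_eq_abs] at h0
    have hfr : ω₁ ^ p j * (ω₁ ^ p i * (te - ts)) * |te - ts|
        = ω₁ ^ p j * ω₁ ^ p i * (te - ts) ^ 2 := by
      rw [abs_of_nonneg hT0]; ring
    have hsq : (te - ts) ^ 2 ≤ (2 * π / ω₁) ^ 2 := pow_le_pow_left₀ hT0 hTle 2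
    calc |Vij u p ω₁ j i ts te| ≤ ω₁ ^ p j * ω₁ ^ p i * (te - ts) ^ 2 := by
          rw [← hfr]; exact h0
      _ ≤ ω₁ ^ p j * ω₁ ^ p i * (2 * π / ω₁) ^ 2 :=
          mul_le_mul_of_nonneg_left hsq (mul_nonneg hpj0' hpi0')
      _ = 4 * π ^ 2 * ((ω₁ ^ p i / ω₁) * (ω₁ ^ p j / ω₁)) := by
          field_simp
          ring
      _ = 4 * π ^ 2 * (ω₁ ^ (p i - 1) * ω₁ ^ (p j - 1)) := by rw [hfrac, hfrac]
      _ ≤ 4 * π ^ 2 * (W * 1) := by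
          have h1 : ω₁ ^ (p i - 1) ≤ W :=
            hmono (p i - 1) (p' - 1) (by linarith [hp'ub i hi1 hil])
          have h2 : ω₁ ^ (p j - 1) ≤ 1 := by
            have := hmono (p j - 1) 0 (by linarith [(hyp.hp j hj1 hjl).2])
            rwa [Real.rpow_zero] at this
          have h3 : (0:ℝ) ≤ ω₁ ^ (p i - 1) := (Real.rpow_pos_of_pos hω0 _).le
          have h4 : (0:ℝ) ≤ ω₁ ^ (p j - 1) := (Real.rpow_pos_of_pos hω0 _).le
          exact mul_le_mul_of_nonneg_left (mul_le_mul h1 h2 h4 hW0.le)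
            (by positivity)
      _ = 4 * π ^ 2 * W := by rw [mul_one]
  -- first sum
  have hsum1 : ‖∑ i ∈ Finset.Icc 1 l, Vi u p ω₁ i ts te • f i ts (x ts)‖
      ≤ l * (2 * π * W * M) := by
    calc ‖∑ i ∈ Finset.Icc 1 l, Vi u p ω₁ i ts te • f i ts (x ts)‖
        ≤ ∑ i ∈ Finset.Icc 1 l, ‖Vi u p ω₁ i ts te • f i ts (x ts)‖ :=
          norm_sum_le _ _
      _ ≤ ∑ _i ∈ Finset.Icc 1 l, (2 * π * W * M) := by
          refine Finset.sum_le_sum fun i hi => ?_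
          rw [Finset.mem_Icc] at hi
          rw [norm_smul, Real.norm_eq_abs]
          have hf := hnormg (f i) (hyp.hreg_f i hi.2)
          have hv := hVite i hi.1 hi.2
          calc |Vi u p ω₁ i ts te| * ‖f i ts (x ts)‖
              ≤ (2 * π * W) * M :=
                mul_le_mul hv hf (norm_nonneg _) (mul_nonneg (by positivity) hW0.le)
            _ = 2 * π * W * M := by ring
      _ = ((Finset.Icc 1 l).card : ℝ) * (2 * π * W * M) := by
          rw [Finset.sum_const, nsmul_eq_mul]
      _ = l * (2 * π * W * M) := by
          rw [Nat.card_Icc]; norm_num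
  -- bracket norm bound
  have hbr : ∀ i j, i ≤ l → j ≤ l → ‖lieBracket f Df i j ts (x ts)‖ ≤ 2 * M := by
    intro i j hil hjl
    have h1 := hnormg _ (hyp.hreg_Lf j i hjl hil)
    have h2 := hnormg _ (hyp.hreg_Lf i j hil hjl)
    calc ‖lieBracket f Df i j ts (x ts)‖
        ≤ ‖lieDeriv f Df i j ts (x ts)‖ + ‖lieDeriv f Df j i ts (x ts)‖ :=
          norm_sub_le _ _
      _ ≤ M + M := add_le_add h1 h2
      _ = 2 * M := by ring
  -- second sum
  have hsum2 : ‖∑ i ∈ Finset.Icc 1 l, ∑ j ∈ Finset.Ioc i l,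
        Vij u p ω₁ j i ts te • lieBracket f Df i j ts (x ts)‖
      ≤ l * (((l:ℝ) - 1) * (4 * π ^ 2 * W * (2 * M))) := by
    have hc : (0:ℝ) ≤ 4 * π ^ 2 * W * (2 * M) :=
      mul_nonneg (mul_nonneg (by positivity) hW0.le) (by linarith)
    calc ‖∑ i ∈ Finset.Icc 1 l, ∑ j ∈ Finset.Ioc i l,
          Vij u p ω₁ j i ts te • lieBracket f Df i j ts (x ts)‖
        ≤ ∑ i ∈ Finset.Icc 1 l, ‖∑ j ∈ Finset.Ioc i l,
            Vij u p ω₁ j i ts te • lieBracket f Df i j ts (x ts)‖ :=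
          norm_sum_le _ _
      _ ≤ ∑ _i ∈ Finset.Icc 1 l, (((l:ℝ) - 1) * (4 * π ^ 2 * W * (2 * M))) := by
          refine Finset.sum_le_sum fun i hi => ?_
          rw [Finset.mem_Icc] at hi
          calc ‖∑ j ∈ Finset.Ioc i l,
                Vij u p ω₁ j i ts te • lieBracket f Df i j ts (x ts)‖
              ≤ ∑ j ∈ Finset.Ioc i l,
                  ‖Vij u p ω₁ j i ts te • lieBracket f Df i j ts (x ts)‖ :=
                norm_sum_le _ _
            _ ≤ ∑ _j ∈ Finset.Ioc i l, (4 * π ^ 2 * W * (2 * M)) := by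
                refine Finset.sum_le_sum fun j hj => ?_
                rw [Finset.mem_Ioc] at hj
                have hj1 : 1 ≤ j := le_trans hi.1 hj.1.le
                rw [norm_smul, Real.norm_eq_abs]
                have hv := hVij i j hi.1 hi.2 hj1 hj.2
                have hb := hbr i j hi.2 hj.2
                calc |Vij u p ω₁ j i ts te| * ‖lieBracket f Df i j ts (x ts)‖
                    ≤ (4 * π ^ 2 * W) * (2 * M) :=
                      mul_le_mul hv hb (norm_nonneg _)
                        (mul_nonneg (by positivity) hW0.le)
                  _ = 4 * π ^ 2 * W * (2 * M) := by ring
            _ = ((Finset.Ioc i l).card : ℝ) * (4 * π ^ 2 * W * (2 * M)) := by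
                rw [Finset.sum_const, nsmul_eq_mul]
            _ ≤ ((l:ℝ) - 1) * (4 * π ^ 2 * W * (2 * M)) := by
                refine mul_le_mul_of_nonneg_right ?_ hc
                rw [Nat.card_Ioc, Nat.cast_sub hi.2]
                have : (1:ℝ) ≤ (i:ℝ) := by exact_mod_cast hi.1
                linarith
      _ = ((Finset.Icc 1 l).card : ℝ) * (((l:ℝ) - 1) * (4 * π ^ 2 * W * (2 * M))) := by
          rw [Finset.sum_const, nsmul_eq_mul]
      _ = l * (((l:ℝ) - 1) * (4 * π ^ 2 * W * (2 * M))) := by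
          rw [Nat.card_Icc]; norm_num
  -- combine
  have hH : ‖Hterm l f Df u p ω₁ x ts te‖
      ≤ l * (2 * π * W * M) + l * (((l:ℝ) - 1) * (4 * π ^ 2 * W * (2 * M))) := by
    rw [Hterm]
    exact le_trans (norm_add_le _ _) (add_le_add hsum1 hsum2)
  have hl1' : (1:ℝ) ≤ (l:ℝ) := by exact_mod_cast hl1
  have hRHS : 8 * π ^ 2 * l ^ 2 * L * Λ₁ * ‖x₀‖ * ω₁ ^ (p' - 1)
      = 8 * π ^ 2 * (l:ℝ) ^ 2 * W * M := by
    rw [hMdef, hWdef]; ring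
  rw [hRHS]
  have hWM : (0:ℝ) ≤ W * M := mul_nonneg hW0.le hM0
  have hlWM : (0:ℝ) ≤ (l:ℝ) * (W * M) := mul_nonneg (by linarith) hWM
  have hkey : 2 * π + 8 * π ^ 2 * ((l:ℝ) - 1) ≤ 8 * π ^ 2 * (l:ℝ) := by nlinarith
  refine le_trans hH ?_
  have e1 : (l:ℝ) * (2 * π * W * M) + l * (((l:ℝ) - 1) * (4 * π ^ 2 * W * (2 * M)))
      = (2 * π + 8 * π ^ 2 * ((l:ℝ) - 1)) * ((l:ℝ) * (W * M)) := by ring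
  have e2 : 8 * π ^ 2 * (l:ℝ) ^ 2 * W * M = (8 * π ^ 2 * (l:ℝ)) * ((l:ℝ) * (W * M)) := by
    ring
  rw [e1, e2]
  exact mul_le_mul_of_nonneg_right hkey hlWM
end

section
/- Bound on I: Under the setup assumptions, define I(t_s, t_e) := ∫_{t_s}^{t_e} ∑_{1≤i<j≤l} [f_i, f_j](θ, x(θ)) γ_{ij}(ω₁) dθ, where γ_{ij}(ω) := (ω^{p_i+p_j}/T) ∫₀^T ∫₀^θ u_j(ωθ) u_i(ωτ) dτ dθ with T := 2π/ω. Then ‖I(t_s, t_e)‖ ≤ 2π² l² L Λ₁ ‖x₀‖ ω₁^{p′−1}. -/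
open MeasureTheory Real Filter

section AuxBoundI

lemma two_mul_pairs_le_boundI (l : ℕ) : 2 * (∑ i ∈ Finset.Icc 1 l, (l - i)) ≤ l ^ 2 := by
  induction l with
  | zero => simp
  | succ m ih =>
    rw [← Finset.insert_Icc_right_eq_Icc_add_one (by omega), Finset.sum_insert (by simp)]
    have h1 : ∑ i ∈ Finset.Icc 1 m, (m + 1 - i) = (∑ i ∈ Finset.Icc 1 m, (m - i)) + m := by
      rw [Finset.sum_congr rfl (fun i hi => by
        simp only [Finset.mem_Icc] at hi; omega : ∀ i ∈ Finset.Icc 1 m, m + 1 - i = (m - i) + 1),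
        Finset.sum_add_distrib, Finset.sum_const, Nat.card_Icc]
      simp
    rw [h1, Nat.sub_self]
    nlinarith [ih]

lemma gamma_bound_boundI (p : ℕ → ℝ) (u : ℕ → ℝ → ℝ) (i j : ℕ) (ω : ℝ) (hω : 0 < ω)
    (hui : ∀ t, |u i t| ≤ 1) (huj : ∀ t, |u j t| ≤ 1) :
    |gammaCoeff p u i j ω| ≤ π * ω ^ (p i + p j - 1) := by
  have hπ := Real.pi_pos
  set T : ℝ := 2 * π / ω with hT
  have hTpos : 0 < T := by positivity
  have hinner : ∀ θ ∈ Set.uIoc (0:ℝ) T, ‖∫ τ in (0:ℝ)..θ, u j (ω * θ) * u i (ω * τ)‖ ≤ θ := by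
    intro θ hθ
    rw [Set.uIoc_of_le hTpos.le] at hθ
    have h1 : ∀ τ ∈ Set.uIoc (0:ℝ) θ, ‖u j (ω * θ) * u i (ω * τ)‖ ≤ 1 := by
      intro τ _
      rw [Real.norm_eq_abs, abs_mul]
      exact mul_le_one₀ (huj _) (abs_nonneg _) (hui _)
    calc ‖∫ τ in (0:ℝ)..θ, u j (ω * θ) * u i (ω * τ)‖ ≤ 1 * |θ - 0| :=
          intervalIntegral.norm_integral_le_of_norm_le_const h1
      _ = θ := by rw [one_mul, sub_zero, abs_of_pos hθ.1]
  have hJ : ‖∫ θ in (0:ℝ)..T, ∫ τ in (0:ℝ)..θ, u j (ω * θ) * u i (ω * τ)‖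
      ≤ T ^ 2 / 2 := by
    have := intervalIntegral.norm_integral_le_abs_of_norm_le (μ := volume)
      (a := (0:ℝ)) (b := T)
      (f := fun θ => ∫ τ in (0:ℝ)..θ, u j (ω * θ) * u i (ω * τ))
      (g := fun θ => θ)
      (((ae_restrict_iff' measurableSet_uIoc).2 (ae_of_all _ hinner)))
      ((continuous_id.intervalIntegrable _ _))
    rw [integral_id] at this
    calc _ ≤ |(T ^ 2 - 0 ^ 2) / 2| := this
      _ = T ^ 2 / 2 := by
          rw [abs_of_nonneg (by nlinarith [sq_nonneg T] : (0:ℝ) ≤ (T^2 - 0^2)/2)]; ring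
  have hrw : |gammaCoeff p u i j ω|
      = ω ^ (p i + p j) / T * ‖∫ θ in (0:ℝ)..T, ∫ τ in (0:ℝ)..θ, u j (ω * θ) * u i (ω * τ)‖ := by
    rw [gammaCoeff, abs_mul, Real.norm_eq_abs, abs_div,
      abs_of_pos (Real.rpow_pos_of_pos hω _), abs_of_pos hTpos]
  rw [hrw]
  have h2 : ω ^ (p i + p j) / T * (T ^ 2 / 2) = π * ω ^ (p i + p j - 1) := by
    rw [Real.rpow_sub hω, Real.rpow_one, hT]
    field_simp
  calc ω ^ (p i + p j) / T * ‖_‖ ≤ ω ^ (p i + p j) / T * (T ^ 2 / 2) :=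
        mul_le_mul_of_nonneg_left hJ (by positivity)
    _ = π * ω ^ (p i + p j - 1) := h2

end AuxBoundI

/-- **Bound on `I`** (Lemma 12). -/
theorem bound_I
    {n : ℕ} (l : ℕ)
    (f : ℕ → ℝ → E n → E n)
    (Df : ℕ → ℝ → E n → (E n →L[ℝ] E n))
    (ft : ℕ → ℝ → E n → E n)
    (Lft : ℕ → ℕ → ℝ → E n → E n)
    (DLf : ℕ → ℕ → ℝ → E n → (E n →L[ℝ] E n))
    (u : ℕ → ℝ → ℝ) (p : ℕ → ℝ) (L : ℝ)
    (hyp : Hyps l f Df ft Lft DLf u p L)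
    -- setup: a bounded solution of (S) with frequency `ω₁ ≥ 1` on `[t₀, t₁]`
    (t₀ t₁ ω₁ Λ₁ : ℝ) (x₀ : E n) (x : ℝ → E n)
    (h01 : t₀ < t₁) (hω₁ : 1 ≤ ω₁) (hΛ₁ : 1 ≤ Λ₁)
    (hx0 : x t₀ = x₀)
    (hsol : IsSSol l f u p ω₁ x (Set.Icc t₀ t₁) t₀)
    (hxb : ∀ t ∈ Set.Icc t₀ t₁, ‖x t‖ ≤ Λ₁ * ‖x₀‖)
    -- `p′ = max_{1 ≤ i ≤ l} p i`
    (p' : ℝ)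
    (hp'ub : ∀ i, 1 ≤ i → i ≤ l → p i ≤ p')
    (hp'mem : ∃ i, 1 ≤ i ∧ i ≤ l ∧ p i = p')
    -- `t_s ∈ [t₀, t_r]` and `t_e ∈ [t_s, min (t_s + T₁) t₁]`, where `T₁ = 2π/ω₁`
    (ts te : ℝ)
    (hts : ts ∈ Set.Icc t₀ (t₀ + (⌊(t₁ - t₀) / (2 * π / ω₁)⌋₊ : ℝ) * (2 * π / ω₁)))
    (hte : te ∈ Set.Icc ts (min (ts + 2 * π / ω₁) t₁)) :
    ‖Iterm l f Df u p ω₁ x ts te‖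
      ≤ 2 * π ^ 2 * l ^ 2 * L * Λ₁ * ‖x₀‖ * ω₁ ^ (p' - 1) := by
  obtain ⟨i0, hi01, hi0l, hpi0⟩ := hp'mem
  have hπ := Real.pi_pos
  have hω : (0:ℝ) < ω₁ := lt_of_lt_of_le one_pos hω₁
  have hp'1 : p' ≤ 1 := by rw [← hpi0]; exact (hyp.hp i0 hi01 hi0l).2.le
  have hL := hyp.hLpos
  have htse : ts ≤ te := hte.1
  have hts0 : t₀ ≤ ts := hts.1
  have hte1 : te ≤ t₁ := le_trans hte.2 (min_le_right _ _)
  have hteT : te - ts ≤ 2 * π / ω₁ := by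
    have := le_trans hte.2 (min_le_left _ _); linarith
  set N : ℕ := ∑ i ∈ Finset.Icc 1 l, (l - i) with hN
  set B : ℝ := π * ω₁ ^ (2*p' - 1) * (2 * L * (Λ₁ * ‖x₀‖)) with hB
  have hΛnn : (0:ℝ) ≤ Λ₁ * ‖x₀‖ := mul_nonneg (by linarith) (norm_nonneg _)
  have hBnn : 0 ≤ B := by
    rw [hB]
    exact mul_nonneg (mul_nonneg hπ.le (Real.rpow_pos_of_pos hω _).le)
      (mul_nonneg (by linarith) hΛnn)
  have key : ∀ θ ∈ Set.uIoc ts te,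
      ‖∑ i ∈ Finset.Icc 1 l, ∑ j ∈ Finset.Ioc i l,
        gammaCoeff p u i j ω₁ • lieBracket f Df i j θ (x θ)‖ ≤ (N : ℝ) * B := by
    intro θ hθ
    rw [Set.uIoc_of_le htse] at hθ
    have hxθ : ‖x θ‖ ≤ Λ₁ * ‖x₀‖ :=
      hxb θ ⟨le_trans hts0 hθ.1.le, le_trans hθ.2 hte1⟩
    have term : ∀ i ∈ Finset.Icc 1 l, ∀ j ∈ Finset.Ioc i l,
        ‖gammaCoeff p u i j ω₁ • lieBracket f Df i j θ (x θ)‖ ≤ B := by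
      intro i hi j hj
      simp only [Finset.mem_Icc, Finset.mem_Ioc] at hi hj
      have hil : i ≤ l := hi.2
      have hjl : j ≤ l := hj.2
      have hj1 : 1 ≤ j := by omega
      have hγ := gamma_bound_boundI p u i j ω₁ hω (hyp.hubdd i hil) (hyp.hubdd j hjl)
      have e1 : lieDeriv f Df i j θ (0 : E n) = 0 := (hyp.hreg_Lf j i hjl hil).2.2 θ
      have e2 : lieDeriv f Df j i θ (0 : E n) = 0 := (hyp.hreg_Lf i j hil hjl).2.2 θ
      have b1 : ‖lieDeriv f Df i j θ (x θ)‖ ≤ L * ‖x θ‖ := by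
        have := (hyp.hreg_Lf j i hjl hil).2.1 θ (x θ) 0
        rwa [e1, sub_zero, sub_zero] at this
      have b2 : ‖lieDeriv f Df j i θ (x θ)‖ ≤ L * ‖x θ‖ := by
        have := (hyp.hreg_Lf i j hil hjl).2.1 θ (x θ) 0
        rwa [e2, sub_zero, sub_zero] at this
      have hbr : ‖lieBracket f Df i j θ (x θ)‖ ≤ 2 * L * (Λ₁ * ‖x₀‖) := by
        have h3 : ‖lieBracket f Df i j θ (x θ)‖ ≤ L * ‖x θ‖ + L * ‖x θ‖ :=
          (norm_sub_le _ _).trans (add_le_add b1 b2)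
        nlinarith [mul_le_mul_of_nonneg_left hxθ hL.le]
      have hγ2 : |gammaCoeff p u i j ω₁| ≤ π * ω₁ ^ (2*p' - 1) := by
        refine hγ.trans (mul_le_mul_of_nonneg_left ?_ hπ.le)
        exact Real.rpow_le_rpow_of_exponent_le hω₁ (by
          have h1 := hp'ub i hi.1 hil
          have h2 := hp'ub j hj1 hjl
          linarith)
      calc ‖gammaCoeff p u i j ω₁ • lieBracket f Df i j θ (x θ)‖
          = |gammaCoeff p u i j ω₁| * ‖lieBracket f Df i j θ (x θ)‖ := by
            rw [norm_smul, Real.norm_eq_abs]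
        _ ≤ (π * ω₁ ^ (2*p' - 1)) * (2 * L * (Λ₁ * ‖x₀‖)) :=
            mul_le_mul hγ2 hbr (norm_nonneg _)
              (mul_nonneg hπ.le (Real.rpow_pos_of_pos hω _).le)
        _ = B := by rw [hB]
    calc ‖∑ i ∈ Finset.Icc 1 l, ∑ j ∈ Finset.Ioc i l,
          gammaCoeff p u i j ω₁ • lieBracket f Df i j θ (x θ)‖
        ≤ ∑ i ∈ Finset.Icc 1 l, ‖∑ j ∈ Finset.Ioc i l,
            gammaCoeff p u i j ω₁ • lieBracket f Df i j θ (x θ)‖ := norm_sum_le _ _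
      _ ≤ ∑ i ∈ Finset.Icc 1 l, ((l - i : ℕ) : ℝ) * B := by
          refine Finset.sum_le_sum fun i hi => ?_
          calc ‖∑ j ∈ Finset.Ioc i l, gammaCoeff p u i j ω₁ • lieBracket f Df i j θ (x θ)‖
              ≤ ∑ j ∈ Finset.Ioc i l,
                  ‖gammaCoeff p u i j ω₁ • lieBracket f Df i j θ (x θ)‖ := norm_sum_le _ _
            _ ≤ ∑ _j ∈ Finset.Ioc i l, B := Finset.sum_le_sum fun j hj => term i hi j hj
            _ = ((l - i : ℕ) : ℝ) * B := by
                rw [Finset.sum_const, Nat.card_Ioc, nsmul_eq_mul]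
      _ = (N : ℝ) * B := by rw [← Finset.sum_mul, hN, Nat.cast_sum]
  have hNa : (N : ℝ) * ω₁ ^ (2*p' - 2) ≤ (l : ℝ)^2 / 2 * ω₁ ^ (p' - 1) := by
    have hNle : (N : ℝ) ≤ (l : ℝ)^2 / 2 := by
      have h := two_mul_pairs_le_boundI l
      rw [← hN] at h
      have : (2 * N : ℝ) ≤ (l : ℝ)^2 := by exact_mod_cast h
      linarith
    have hmono : ω₁ ^ (2*p' - 2) ≤ ω₁ ^ (p' - 1) :=
      Real.rpow_le_rpow_of_exponent_le hω₁ (by linarith)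
    calc (N : ℝ) * ω₁ ^ (2*p' - 2) ≤ (l : ℝ)^2 / 2 * ω₁ ^ (2*p' - 2) :=
          mul_le_mul_of_nonneg_right hNle (Real.rpow_pos_of_pos hω _).le
      _ ≤ (l : ℝ)^2 / 2 * ω₁ ^ (p' - 1) :=
          mul_le_mul_of_nonneg_left hmono (by positivity)
  have hA2 : ω₁ ^ (2*p' - 1) = ω₁ ^ (2*p' - 2) * ω₁ := by
    rw [show (2*p' - 1) = (2*p' - 2) + 1 by ring, Real.rpow_add hω, Real.rpow_one]
  have hCnn : (0:ℝ) ≤ 4 * π^2 * (L * (Λ₁ * ‖x₀‖)) :=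
    mul_nonneg (by positivity) (mul_nonneg hL.le hΛnn)
  unfold Iterm
  calc ‖∫ θ in ts..te, ∑ i ∈ Finset.Icc 1 l, ∑ j ∈ Finset.Ioc i l,
        gammaCoeff p u i j ω₁ • lieBracket f Df i j θ (x θ)‖
      ≤ (N : ℝ) * B * |te - ts| := intervalIntegral.norm_integral_le_of_norm_le_const key
    _ ≤ (N : ℝ) * B * (2 * π / ω₁) := by
        rw [abs_of_nonneg (by linarith : (0:ℝ) ≤ te - ts)]
        exact mul_le_mul_of_nonneg_left hteT (mul_nonneg (Nat.cast_nonneg _) hBnn)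
    _ = (4 * π^2 * (L * (Λ₁ * ‖x₀‖))) * ((N : ℝ) * ω₁ ^ (2*p' - 2)) := by
        rw [hB, hA2]; field_simp; ring
    _ ≤ (4 * π^2 * (L * (Λ₁ * ‖x₀‖))) * ((l : ℝ)^2 / 2 * ω₁ ^ (p' - 1)) :=
        mul_le_mul_of_nonneg_left hNa hCnn
    _ = 2 * π ^ 2 * (l:ℝ) ^ 2 * L * Λ₁ * ‖x₀‖ * ω₁ ^ (p' - 1) := by ring
end

section
/- Bound on R_{L1}: Under the setup assumptions together with the interaction condition, define R_{L1}(t_s, t_e) := ∑_{1≤i<j≤l} γ_{ij}(ω₁) ∫_{t_s}^{t_e} ( [f_i, f_j](t_s, x(t_s)) − [f_i, f_j](θ, x(θ)) ) dθ, where γ_{ij}(ω) := (ω^{p_i+p_j}/T) ∫₀^T ∫₀^θ u_j(ωθ) u_i(ωτ) dτ dθ with T := 2π/ω. Then ‖R_{L1}(t_s, t_e)‖ ≤ 2π² (l+1)³ L² Λ₁ ‖x₀‖ ω₁^{p′−1} T₁. -/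
open MeasureTheory Real Filter

section Aux

open intervalIntegral MeasureTheory

variable {n : ℕ}

lemma regVF_norm_le {L : ℝ} {g : ℝ → E n → E n} (h : RegVF L g) (t : ℝ) (y : E n) :
    ‖g t y‖ ≤ L * ‖y‖ := by
  simpa [h.2.2 t] using h.2.1 t y 0

lemma regVF_contOn {L : ℝ} {g : ℝ → E n → E n} (h : RegVF L g) {x : ℝ → E n} {s : Set ℝ}
    (hx : ContinuousOn x s) : ContinuousOn (fun τ => g τ (x τ)) s := by
  intro θ₀ hθ₀
  have h1 : ContinuousWithinAt (fun τ => g τ (x θ₀)) s θ₀ :=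
    (h.1 (x θ₀)).continuousWithinAt
  have hx0 : Filter.Tendsto (fun τ => L * ‖x τ - x θ₀‖) (nhdsWithin θ₀ s) (nhds 0) := by
    have h2 : Filter.Tendsto (fun τ => ‖x τ - x θ₀‖) (nhdsWithin θ₀ s) (nhds 0) := by
      have h2' : Filter.Tendsto (fun τ => x τ - x θ₀) (nhdsWithin θ₀ s) (nhds (x θ₀ - x θ₀)) :=
        (hx θ₀ hθ₀).sub tendsto_const_nhds
      rw [sub_self] at h2'
      simpa using h2'.norm
    simpa using h2.const_mul L
  have h2 : Filter.Tendsto (fun τ => g τ (x τ) - g τ (x θ₀)) (nhdsWithin θ₀ s) (nhds 0) :=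
    squeeze_zero_norm (fun τ => h.2.1 τ (x τ) (x θ₀)) hx0
  have h3 := h2.add h1
  simp only [zero_add] at h3
  show Filter.Tendsto _ _ _
  have he : (fun τ => g τ (x τ)) = fun τ => (g τ (x τ) - g τ (x θ₀)) + g τ (x θ₀) := by
    funext τ; abel
  rw [he]
  simpa using h3

lemma norm_deriv_le_of_lip {F : Type*} [NormedAddCommGroup F] [NormedSpace ℝ F]
    {φ : ℝ → F} {d : F} {C : ℝ} (hC : 0 ≤ C) (hd : HasDerivAt φ d 0)
    (hlip : ∀ a b : ℝ, ‖φ a - φ b‖ ≤ C * ‖a - b‖) : ‖d‖ ≤ C := by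
  have hlip' : LipschitzWith (Real.toNNReal C) φ :=
    LipschitzWith.of_dist_le_mul fun a b => by
      simpa [dist_eq_norm, Real.coe_toNNReal C hC] using hlip a b
  have h2 := hd.hasFDerivAt.le_of_lipschitz hlip'
  rw [Real.coe_toNNReal C hC] at h2
  refine le_trans ?_ h2
  have h3 := (ContinuousLinearMap.smulRight (1 : ℝ →L[ℝ] ℝ) d).le_opNorm 1
  simpa using h3

end Aux

set_option maxHeartbeats 2000000 in
/-- **Bound on `R_{L1}`** (Lemma 13). -/
theorem bound_RL1
    {n : ℕ} (l : ℕ)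
    (f : ℕ → ℝ → E n → E n)
    (Df : ℕ → ℝ → E n → (E n →L[ℝ] E n))
    (ft : ℕ → ℝ → E n → E n)
    (Lft : ℕ → ℕ → ℝ → E n → E n)
    (DLf : ℕ → ℕ → ℝ → E n → (E n →L[ℝ] E n))
    (u : ℕ → ℝ → ℝ) (p : ℕ → ℝ) (L : ℝ)
    (hyp : Hyps l f Df ft Lft DLf u p L)
    (hint : InteractionCondition l f Df u p)
    -- setup: a bounded solution of (S) with frequency `ω₁ ≥ 1` on `[t₀, t₁]`
    (t₀ t₁ ω₁ Λ₁ : ℝ) (x₀ : E n) (x : ℝ → E n)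
    (h01 : t₀ < t₁) (hω₁ : 1 ≤ ω₁) (hΛ₁ : 1 ≤ Λ₁)
    (hx0 : x t₀ = x₀)
    (hsol : IsSSol l f u p ω₁ x (Set.Icc t₀ t₁) t₀)
    (hxb : ∀ t ∈ Set.Icc t₀ t₁, ‖x t‖ ≤ Λ₁ * ‖x₀‖)
    -- `p′ = max_{1 ≤ i ≤ l} p i`
    (p' : ℝ)
    (hp'ub : ∀ i, 1 ≤ i → i ≤ l → p i ≤ p')
    (hp'mem : ∃ i, 1 ≤ i ∧ i ≤ l ∧ p i = p')
    -- `t_s ∈ [t₀, t_r]` and `t_e ∈ [t_s, min (t_s + T₁) t₁]`, where `T₁ = 2π/ω₁`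
    (ts te : ℝ)
    (hts : ts ∈ Set.Icc t₀ (t₀ + (⌊(t₁ - t₀) / (2 * π / ω₁)⌋₊ : ℝ) * (2 * π / ω₁)))
    (hte : te ∈ Set.Icc ts (min (ts + 2 * π / ω₁) t₁)) :
    ‖RL1 l f Df u p ω₁ x ts te‖
      ≤ 2 * π ^ 2 * ((l : ℝ) + 1) ^ 3 * L ^ 2 * Λ₁ * ‖x₀‖ * ω₁ ^ (p' - 1) * (2 * π / ω₁) := by
  classical
  obtain ⟨hxcont, hxint⟩ := hsol
  have hπ : (0:ℝ) < π := Real.pi_pos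
  have hω0 : (0:ℝ) < ω₁ := lt_of_lt_of_le one_pos hω₁
  have hL : (0:ℝ) < L := hyp.hLpos
  have hωpp : ∀ r : ℝ, (0:ℝ) < ω₁ ^ r := fun r => Real.rpow_pos_of_pos hω0 r
  set T₁ : ℝ := 2 * π / ω₁ with hT₁def
  have hT₁pos : 0 < T₁ := by positivity
  set C0 : ℝ := Λ₁ * ‖x₀‖ with hC0def
  have hC0 : 0 ≤ C0 := mul_nonneg (by linarith) (norm_nonneg _)
  obtain ⟨i₀, hi₀1, hi₀l, hi₀p⟩ := hp'mem
  have hp'pos : 0 < p' := hi₀p ▸ (hyp.hp i₀ hi₀1 hi₀l).1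
  have hωp'1 : 1 ≤ ω₁ ^ p' := Real.one_le_rpow hω₁ hp'pos.le
  -- interval facts
  have hts0 : t₀ ≤ ts := hts.1
  have hts1 : ts ≤ t₁ := by
    have h1 : (⌊(t₁ - t₀) / T₁⌋₊ : ℝ) ≤ (t₁ - t₀) / T₁ :=
      Nat.floor_le (div_nonneg (by linarith) hT₁pos.le)
    have h2 : (⌊(t₁ - t₀) / T₁⌋₊ : ℝ) * T₁ ≤ t₁ - t₀ := by
      rw [← le_div_iff₀ hT₁pos]; exact h1
    have := hts.2; linarith
  have hste : ts ≤ te := hte.1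
  have hte1 : te ≤ t₁ := le_trans hte.2 (min_le_right _ _)
  have hteT : te - ts ≤ T₁ := by
    have := le_trans hte.2 (min_le_left _ _); linarith
  -- basic norm estimates
  have hfnorm : ∀ i, i ≤ l → ∀ t y, ‖f i t y‖ ≤ L * ‖y‖ := fun i hi t y =>
    regVF_norm_le (hyp.hreg_f i hi) t y
  have hDfnorm : ∀ i, i ≤ l → ∀ t y, ‖Df i t y‖ ≤ L := by
    intro i hi t y
    have hlip : LipschitzWith (Real.toNNReal L) (f i t) :=
      LipschitzWith.of_dist_le_mul fun a b => by
        simpa [dist_eq_norm, Real.coe_toNNReal L hL.le] using (hyp.hreg_f i hi).2.1 t a b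
    have h2 := (hyp.hDf i hi t y).le_of_lipschitz hlip
    rwa [Real.coe_toNNReal L hL.le] at h2
  -- temporal difference of f
  have hftemp : ∀ i, i ≤ l → ∀ (y : E n) (a b : ℝ),
      f i b y - f i a y = ∫ σ in a..b, ft i σ y := by
    intro i hi y a b
    refine (intervalIntegral.integral_eq_sub_of_hasDerivAt (fun σ _ => hyp.hft i hi y σ)
      (((hyp.hreg_ft i hi).1 y).intervalIntegrable a b)).symm
  have hftempn : ∀ i, i ≤ l → ∀ (y : E n) (a b : ℝ),
      ‖f i b y - f i a y‖ ≤ L * ‖y‖ * |b - a| := by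
    intro i hi y a b
    rw [hftemp i hi y a b]
    exact intervalIntegral.norm_integral_le_of_norm_le_const fun σ _ =>
      regVF_norm_le (hyp.hreg_ft i hi) σ y
  -- temporal difference of Df applied to a vector
  have hDftemp : ∀ i, i ≤ l → ∀ (y v : E n) (a b : ℝ),
      ‖Df i b y v - Df i a y v‖ ≤ L * ‖v‖ * |b - a| := by
    intro i hi y v a b
    have hline : HasDerivAt (fun s : ℝ => y + s • v) v 0 := by
      simpa using ((hasDerivAt_id (0:ℝ)).smul_const v).const_add y
    have hφd : HasDerivAt (fun h : ℝ => f i b (y + h • v) - f i a (y + h • v))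
        (Df i b y v - Df i a y v) 0 := by
      have h1 : HasDerivAt (fun h : ℝ => f i b (y + h • v)) (Df i b y v) 0 := by
        have h1' := (hyp.hDf i hi b (y + (0:ℝ) • v)).comp_hasDerivAt 0 hline
        simp only [zero_smul, add_zero] at h1'
        exact h1'
      have h2 : HasDerivAt (fun h : ℝ => f i a (y + h • v)) (Df i a y v) 0 := by
        have h2' := (hyp.hDf i hi a (y + (0:ℝ) • v)).comp_hasDerivAt 0 hline
        simp only [zero_smul, add_zero] at h2'
        exact h2'
      exact h1.sub h2
    refine norm_deriv_le_of_lip (by positivity) hφd ?_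
    intro h h'
    have e1 : (f i b (y + h • v) - f i a (y + h • v)) - (f i b (y + h' • v) - f i a (y + h' • v))
        = ∫ σ in a..b, (ft i σ (y + h • v) - ft i σ (y + h' • v)) := by
      rw [intervalIntegral.integral_sub (((hyp.hreg_ft i hi).1 _).intervalIntegrable a b)
        (((hyp.hreg_ft i hi).1 _).intervalIntegrable a b)]
      rw [← hftemp i hi _ a b, ← hftemp i hi _ a b]
    rw [e1]
    have h3 : ∀ σ ∈ Set.uIoc a b,
        ‖ft i σ (y + h • v) - ft i σ (y + h' • v)‖ ≤ L * ‖v‖ * ‖h - h'‖ := by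
      intro σ _
      calc ‖ft i σ (y + h • v) - ft i σ (y + h' • v)‖
          ≤ L * ‖(y + h • v) - (y + h' • v)‖ := (hyp.hreg_ft i hi).2.1 σ _ _
        _ = L * ‖v‖ * ‖h - h'‖ := by
            rw [add_sub_add_left_eq_sub, ← sub_smul, norm_smul]; ring
    have h4 := intervalIntegral.norm_integral_le_of_norm_le_const h3
    calc ‖∫ σ in a..b, (ft i σ (y + h • v) - ft i σ (y + h' • v))‖
        ≤ L * ‖v‖ * ‖h - h'‖ * |b - a| := h4
      _ = L * ‖v‖ * |b - a| * ‖h - h'‖ := by ring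
  -- temporal difference of lieDeriv
  have hldtemp : ∀ a b, a ≤ l → b ≤ l → ∀ (y : E n) (s t : ℝ),
      ‖lieDeriv f Df a b t y - lieDeriv f Df a b s y‖ ≤ 2 * L^2 * ‖y‖ * |t - s| := by
    intro a b ha hb y s t
    have e : lieDeriv f Df a b t y - lieDeriv f Df a b s y
        = Df b t y (f a t y - f a s y) + (Df b t y (f a s y) - Df b s y (f a s y)) := by
      simp only [lieDeriv, map_sub]; abel
    rw [e]
    have h1 : ‖Df b t y (f a t y - f a s y)‖ ≤ L * (L * ‖y‖ * |t - s|) := by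
      refine le_trans ((Df b t y).le_opNorm _) ?_
      exact mul_le_mul (hDfnorm b hb t y) (hftempn a ha y s t) (norm_nonneg _) hL.le
    have h2 : ‖Df b t y (f a s y) - Df b s y (f a s y)‖ ≤ L * (L * ‖y‖) * |t - s| := by
      refine le_trans (hDftemp b hb y (f a s y) s t) ?_
      have := hfnorm a ha s y
      have h5 : L * ‖f a s y‖ ≤ L * (L * ‖y‖) := by nlinarith
      exact mul_le_mul_of_nonneg_right h5 (abs_nonneg _)
    calc ‖Df b t y (f a t y - f a s y) + (Df b t y (f a s y) - Df b s y (f a s y))‖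
        ≤ ‖Df b t y (f a t y - f a s y)‖ + ‖Df b t y (f a s y) - Df b s y (f a s y)‖ :=
          norm_add_le _ _
      _ ≤ L * (L * ‖y‖ * |t - s|) + L * (L * ‖y‖) * |t - s| := add_le_add h1 h2
      _ = 2 * L^2 * ‖y‖ * |t - s| := by ring
  -- the drift term and solution increments
  set G : ℝ → E n := fun τ => f 0 τ (x τ)
      + ∑ i ∈ Finset.Icc 1 l, (ω₁ ^ p i * u i (ω₁ * τ)) • f i τ (x τ) with hGdef
  have htermB : ∀ i, i ∈ Finset.Icc 1 l → ∀ τ, τ ∈ Set.Icc t₀ t₁ →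
      ‖(ω₁ ^ p i * u i (ω₁ * τ)) • f i τ (x τ)‖ ≤ ω₁ ^ p' * (L * C0) := by
    intro i hi τ hτ
    obtain ⟨hi1, hil⟩ := Finset.mem_Icc.mp hi
    rw [norm_smul]
    have hx : ‖x τ‖ ≤ C0 := hxb τ hτ
    have hu : |u i (ω₁ * τ)| ≤ 1 := hyp.hubdd i hil _
    have hcoef : ‖ω₁ ^ p i * u i (ω₁ * τ)‖ ≤ ω₁ ^ p' := by
      rw [Real.norm_eq_abs, abs_mul, abs_of_nonneg (hωpp (p i)).le]
      calc ω₁ ^ p i * |u i (ω₁ * τ)| ≤ ω₁ ^ p i * 1 :=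
            mul_le_mul_of_nonneg_left hu (hωpp (p i)).le
        _ = ω₁ ^ p i := mul_one _
        _ ≤ ω₁ ^ p' := Real.rpow_le_rpow_of_exponent_le hω₁ (hp'ub i hi1 hil)
    have hfn : ‖f i τ (x τ)‖ ≤ L * C0 := by
      refine le_trans (hfnorm i hil τ (x τ)) ?_
      nlinarith
    exact mul_le_mul hcoef hfn (norm_nonneg _) (hωpp p').le
  have hGbound : ∀ τ ∈ Set.Icc t₀ t₁, ‖G τ‖ ≤ L * C0 * (1 + l * ω₁ ^ p') := by
    intro τ hτ
    have hx : ‖x τ‖ ≤ C0 := hxb τ hτ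
    have h0 : ‖f 0 τ (x τ)‖ ≤ L * C0 := by
      refine le_trans (hfnorm 0 (Nat.zero_le l) τ (x τ)) ?_; nlinarith
    have hsum : ‖∑ i ∈ Finset.Icc 1 l, (ω₁ ^ p i * u i (ω₁ * τ)) • f i τ (x τ)‖
        ≤ (l:ℝ) * (ω₁ ^ p' * (L * C0)) := by
      refine le_trans (norm_sum_le _ _) ?_
      have hcard := Finset.sum_le_card_nsmul (Finset.Icc 1 l)
        (fun i => ‖(ω₁ ^ p i * u i (ω₁ * τ)) • f i τ (x τ)‖) (ω₁ ^ p' * (L * C0))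
        (fun i hi => htermB i hi τ hτ)
      rw [Nat.card_Icc, nsmul_eq_mul] at hcard
      simpa using hcard
    calc ‖G τ‖ ≤ ‖f 0 τ (x τ)‖
          + ‖∑ i ∈ Finset.Icc 1 l, (ω₁ ^ p i * u i (ω₁ * τ)) • f i τ (x τ)‖ := norm_add_le _ _
      _ ≤ L * C0 + (l:ℝ) * (ω₁ ^ p' * (L * C0)) := add_le_add h0 hsum
      _ = L * C0 * (1 + l * ω₁ ^ p') := by ring
  have hGint : ∀ a b, a ∈ Set.Icc t₀ t₁ → b ∈ Set.Icc t₀ t₁ →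
      IntervalIntegrable G MeasureTheory.volume a b := by
    have hIcc : MeasureTheory.IntegrableOn G (Set.Icc t₀ t₁) := by
      have h0 : MeasureTheory.IntegrableOn (fun τ => f 0 τ (x τ)) (Set.Icc t₀ t₁) :=
        (regVF_contOn (hyp.hreg_f 0 (Nat.zero_le l)) hxcont).integrableOn_Icc
      have hsum : MeasureTheory.IntegrableOn
          (fun τ => ∑ i ∈ Finset.Icc 1 l, (ω₁ ^ p i * u i (ω₁ * τ)) • f i τ (x τ))
          (Set.Icc t₀ t₁) := by
        refine MeasureTheory.integrable_finset_sum _ (fun i hi => ?_)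
        obtain ⟨hi1, hil⟩ := Finset.mem_Icc.mp hi
        have hc : Measurable fun τ => ω₁ ^ p i * u i (ω₁ * τ) :=
          measurable_const.mul ((hyp.humeas i hil).comp (measurable_const_mul ω₁))
        have hF : MeasureTheory.AEStronglyMeasurable (fun τ => f i τ (x τ))
            (MeasureTheory.volume.restrict (Set.Icc t₀ t₁)) :=
          (regVF_contOn (hyp.hreg_f i hil) hxcont).aestronglyMeasurable measurableSet_Icc
        refine MeasureTheory.Integrable.mono' (g := fun _ => ω₁ ^ p' * (L * C0))
          (MeasureTheory.integrableOn_const measure_Icc_lt_top.ne)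
          (hc.aestronglyMeasurable.smul hF) ?_
        refine (MeasureTheory.ae_restrict_iff' measurableSet_Icc).mpr
          (Filter.Eventually.of_forall fun τ hτ => ?_)
        exact htermB i hi τ hτ
      exact h0.add hsum
    intro a b ha hb
    exact (hIcc.mono_set (Set.uIcc_subset_Icc ha hb)).intervalIntegrable
  have hxeq : ∀ a b, t₀ ≤ a → a ≤ b → b ≤ t₁ → x b - x a = ∫ τ in a..b, G τ := by
    intro a b ha hab hb
    have hma : a ∈ Set.Icc t₀ t₁ := ⟨ha, le_trans hab hb⟩
    have hmb : b ∈ Set.Icc t₀ t₁ := ⟨le_trans ha hab, hb⟩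
    have e1 := hxint b hmb
    have e2 := hxint a hma
    have e3 := intervalIntegral.integral_interval_sub_left
      (hGint t₀ b (Set.left_mem_Icc.mpr h01.le) hmb) (hGint t₀ a (Set.left_mem_Icc.mpr h01.le) hma)
    rw [e1, e2, ← e3]
    abel
  have hxdiff : ∀ a b, t₀ ≤ a → a ≤ b → b ≤ t₁ →
      ‖x b - x a‖ ≤ L * C0 * (1 + l * ω₁ ^ p') * (b - a) := by
    intro a b ha hab hb
    rw [hxeq a b ha hab hb]
    have hbd : ∀ τ ∈ Set.uIoc a b, ‖G τ‖ ≤ L * C0 * (1 + l * ω₁ ^ p') := by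
      intro τ hτ
      rw [Set.uIoc_of_le hab] at hτ
      exact hGbound τ ⟨le_trans ha hτ.1.le, le_trans hτ.2 hb⟩
    have h2 := intervalIntegral.norm_integral_le_of_norm_le_const hbd
    rwa [abs_of_nonneg (by linarith : (0:ℝ) ≤ b - a)] at h2
  -- bracket estimates
  have hbrtemp : ∀ i j, i ≤ l → j ≤ l → ∀ (y : E n) (s t : ℝ),
      ‖lieBracket f Df i j t y - lieBracket f Df i j s y‖ ≤ 4 * L^2 * ‖y‖ * |t - s| := by
    intro i j hi hj y s t
    have h1 := hldtemp i j hi hj y s t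
    have h2 := hldtemp j i hj hi y s t
    have e : lieBracket f Df i j t y - lieBracket f Df i j s y
        = (lieDeriv f Df i j t y - lieDeriv f Df i j s y)
          - (lieDeriv f Df j i t y - lieDeriv f Df j i s y) := by
      simp only [lieBracket]; abel
    rw [e]
    calc ‖(lieDeriv f Df i j t y - lieDeriv f Df i j s y)
          - (lieDeriv f Df j i t y - lieDeriv f Df j i s y)‖
        ≤ ‖lieDeriv f Df i j t y - lieDeriv f Df i j s y‖
          + ‖lieDeriv f Df j i t y - lieDeriv f Df j i s y‖ := norm_sub_le _ _
      _ ≤ 2 * L^2 * ‖y‖ * |t - s| + 2 * L^2 * ‖y‖ * |t - s| := add_le_add h1 h2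
      _ = 4 * L^2 * ‖y‖ * |t - s| := by ring
  have hbrlip : ∀ i j, i ≤ l → j ≤ l → ∀ (t : ℝ) (a b : E n),
      ‖lieBracket f Df i j t a - lieBracket f Df i j t b‖ ≤ 2 * L * ‖a - b‖ := by
    intro i j hi hj t a b
    have h1 := (hyp.hreg_Lf j i hj hi).2.1 t a b
    have h2 := (hyp.hreg_Lf i j hi hj).2.1 t a b
    have e : lieBracket f Df i j t a - lieBracket f Df i j t b
        = (lieDeriv f Df i j t a - lieDeriv f Df i j t b)
          - (lieDeriv f Df j i t a - lieDeriv f Df j i t b) := by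
      simp only [lieBracket]; abel
    rw [e]
    calc ‖(lieDeriv f Df i j t a - lieDeriv f Df i j t b)
          - (lieDeriv f Df j i t a - lieDeriv f Df j i t b)‖
        ≤ ‖lieDeriv f Df i j t a - lieDeriv f Df i j t b‖
          + ‖lieDeriv f Df j i t a - lieDeriv f Df j i t b‖ := norm_sub_le _ _
      _ ≤ L * ‖a - b‖ + L * ‖a - b‖ := add_le_add h1 h2
      _ = 2 * L * ‖a - b‖ := by ring
  -- pointwise bound for the integrand of R_{L1}
  set K : ℝ := (2 * (l:ℝ) + 6) * L^2 * C0 * ω₁ ^ p' with hKdef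
  have hKnn : 0 ≤ K := by
    exact mul_nonneg (mul_nonneg (mul_nonneg (by positivity) (sq_nonneg L)) hC0) (hωpp p').le
  have hdiffb : ∀ i j, i ≤ l → j ≤ l → ∀ θ ∈ Set.Icc ts te,
      ‖lieBracket f Df i j ts (x ts) - lieBracket f Df i j θ (x θ)‖ ≤ K * (θ - ts) := by
    intro i j hi hj θ hθ
    have hθts : ts ≤ θ := hθ.1
    have hθt1 : θ ≤ t₁ := le_trans hθ.2 hte1
    have h6 : (0:ℝ) ≤ θ - ts := by linarith
    have hxts : ‖x ts‖ ≤ C0 := hxb ts ⟨hts0, hts1⟩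
    have e : lieBracket f Df i j ts (x ts) - lieBracket f Df i j θ (x θ)
        = (lieBracket f Df i j ts (x ts) - lieBracket f Df i j θ (x ts))
          + (lieBracket f Df i j θ (x ts) - lieBracket f Df i j θ (x θ)) := by abel
    rw [e]
    have habs : |ts - θ| = θ - ts := by
      rw [abs_sub_comm]; exact abs_of_nonneg h6
    have h1 : ‖lieBracket f Df i j ts (x ts) - lieBracket f Df i j θ (x ts)‖
        ≤ 4 * L^2 * C0 * (θ - ts) := by
      have h1' := hbrtemp i j hi hj (x ts) θ ts
      rw [habs] at h1'
      refine le_trans h1' ?_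
      have h7 : (0:ℝ) ≤ 4 * L^2 := by positivity
      exact mul_le_mul_of_nonneg_right (mul_le_mul_of_nonneg_left hxts h7) h6
    have h2 : ‖lieBracket f Df i j θ (x ts) - lieBracket f Df i j θ (x θ)‖
        ≤ 2 * L * (L * C0 * (1 + l * ω₁ ^ p') * (θ - ts)) := by
      have hx2 := hxdiff ts θ hts0 hθts hθt1
      refine le_trans (hbrlip i j hi hj θ (x ts) (x θ)) ?_
      rw [norm_sub_rev]
      exact mul_le_mul_of_nonneg_left hx2 (by linarith)
    calc ‖(lieBracket f Df i j ts (x ts) - lieBracket f Df i j θ (x ts))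
          + (lieBracket f Df i j θ (x ts) - lieBracket f Df i j θ (x θ))‖
        ≤ ‖lieBracket f Df i j ts (x ts) - lieBracket f Df i j θ (x ts)‖
          + ‖lieBracket f Df i j θ (x ts) - lieBracket f Df i j θ (x θ)‖ := norm_add_le _ _
      _ ≤ 4 * L^2 * C0 * (θ - ts) + 2 * L * (L * C0 * (1 + l * ω₁ ^ p') * (θ - ts)) :=
          add_le_add h1 h2
      _ ≤ K * (θ - ts) := by
        rw [hKdef]
        nlinarith [mul_nonneg (mul_nonneg (mul_nonneg (sq_nonneg L) hC0) h6)
          (sub_nonneg.mpr hωp'1), hωp'1, hC0, sq_nonneg L, h6]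
  -- bound on the integral appearing in each term of R_{L1}
  have hInt : ∀ i j, i ≤ l → j ≤ l →
      ‖∫ θ in ts..te, (lieBracket f Df i j ts (x ts) - lieBracket f Df i j θ (x θ))‖
        ≤ K * (te - ts)^2 / 2 := by
    intro i j hi hj
    have hb : IntervalIntegrable (fun θ => K * (θ - ts)) MeasureTheory.volume ts te :=
      ((continuous_const.mul (continuous_id.sub continuous_const)).intervalIntegrable _ _)
    have hae : ∀ᵐ θ ∂(MeasureTheory.volume.restrict (Set.uIoc ts te)),
        ‖lieBracket f Df i j ts (x ts) - lieBracket f Df i j θ (x θ)‖ ≤ K * (θ - ts) := by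
      refine (MeasureTheory.ae_restrict_iff' measurableSet_uIoc).mpr
        (Filter.Eventually.of_forall fun θ hθ => ?_)
      rw [Set.uIoc_of_le hste] at hθ
      exact hdiffb i j hi hj θ ⟨hθ.1.le, hθ.2⟩
    have h2 := intervalIntegral.norm_integral_le_abs_of_norm_le hae hb
    refine le_trans h2 (le_of_eq ?_)
    have e1 : (∫ θ in ts..te, K * (θ - ts)) = K * (te - ts)^2 / 2 := by
      rw [intervalIntegral.integral_const_mul]
      have e2 : (∫ θ in ts..te, (θ - ts)) = (te - ts)^2 / 2 := by
        rw [intervalIntegral.integral_sub intervalIntegral.intervalIntegrable_id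
          intervalIntegrable_const,
          integral_id, intervalIntegral.integral_const]
        simp only [smul_eq_mul]
        ring
      rw [e2]; ring
    rw [e1]
    exact abs_of_nonneg (div_nonneg (mul_nonneg hKnn (sq_nonneg _)) (by norm_num))
  -- bound on the gamma coefficients
  have hγ : ∀ i j, 1 ≤ i → i ≤ l → 1 ≤ j → j ≤ l →
      |gammaCoeff p u i j ω₁| ≤ π * ω₁ ^ (p i + p j) / ω₁ := by
    intro i j hi1 hil hj1 hjl
    have hinner : ∀ θ ∈ Set.Ioc (0:ℝ) T₁,
        ‖∫ τ in (0:ℝ)..θ, u j (ω₁ * θ) * u i (ω₁ * τ)‖ ≤ θ := by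
      intro θ hθ
      have hptw : ∀ τ ∈ Set.uIoc (0:ℝ) θ, ‖u j (ω₁ * θ) * u i (ω₁ * τ)‖ ≤ 1 := by
        intro τ _
        rw [Real.norm_eq_abs, abs_mul]
        exact mul_le_one₀ (hyp.hubdd j hjl _) (abs_nonneg _) (hyp.hubdd i hil _)
      have h2 := intervalIntegral.norm_integral_le_of_norm_le_const hptw
      simpa [abs_of_nonneg hθ.1.le] using h2
    have houter : ‖∫ θ in (0:ℝ)..T₁, (∫ τ in (0:ℝ)..θ, u j (ω₁ * θ) * u i (ω₁ * τ))‖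
        ≤ T₁^2 / 2 := by
      have hb : IntervalIntegrable (fun θ : ℝ => θ) MeasureTheory.volume 0 T₁ :=
        continuous_id.intervalIntegrable _ _
      have hae : ∀ᵐ θ ∂(MeasureTheory.volume.restrict (Set.uIoc (0:ℝ) T₁)),
          ‖∫ τ in (0:ℝ)..θ, u j (ω₁ * θ) * u i (ω₁ * τ)‖ ≤ θ := by
        refine (MeasureTheory.ae_restrict_iff' measurableSet_uIoc).mpr
          (Filter.Eventually.of_forall fun θ hθ => ?_)
        rw [Set.uIoc_of_le hT₁pos.le] at hθ
        exact hinner θ hθ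
      have h2 := intervalIntegral.norm_integral_le_abs_of_norm_le hae hb
      refine le_trans h2 (le_of_eq ?_)
      rw [integral_id,
        abs_of_nonneg (by nlinarith [sq_nonneg T₁] : (0:ℝ) ≤ (T₁^2 - 0^2)/2)]
      ring
    have e1 : gammaCoeff p u i j ω₁ = ω₁ ^ (p i + p j) / T₁
        * ∫ θ in (0:ℝ)..T₁, (∫ τ in (0:ℝ)..θ, u j (ω₁ * θ) * u i (ω₁ * τ)) := by
      rw [gammaCoeff, ← hT₁def]
    rw [e1, abs_mul, abs_of_nonneg (div_nonneg (hωpp _).le hT₁pos.le)]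
    calc ω₁ ^ (p i + p j) / T₁ * |∫ θ in (0:ℝ)..T₁, (∫ τ in (0:ℝ)..θ, u j (ω₁ * θ) * u i (ω₁ * τ))|
        ≤ ω₁ ^ (p i + p j) / T₁ * (T₁^2 / 2) := by
          refine mul_le_mul_of_nonneg_left ?_ (div_nonneg (hωpp _).le hT₁pos.le)
          simpa [Real.norm_eq_abs] using houter
      _ = π * ω₁ ^ (p i + p j) / ω₁ := by
          rw [hT₁def]; field_simp
  -- per-term bound
  set B : ℝ := π^2 * (2 * (l:ℝ) + 6) * L^2 * C0 * ω₁ ^ (p' - 1) * T₁ with hBdef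
  have hBnn : 0 ≤ B := by
    rw [hBdef]
    exact mul_nonneg (mul_nonneg (mul_nonneg (mul_nonneg (by positivity) (sq_nonneg L)) hC0)
      (hωpp (p' - 1)).le) hT₁pos.le
  have hterm : ∀ i ∈ Finset.Icc 1 l, ∀ j ∈ Finset.Ioc i l,
      ‖gammaCoeff p u i j ω₁ •
        ∫ θ in ts..te, (lieBracket f Df i j ts (x ts) - lieBracket f Df i j θ (x θ))‖ ≤ B := by
    intro i hi j hj
    obtain ⟨hi1, hil⟩ := Finset.mem_Icc.mp hi
    obtain ⟨hij, hjl⟩ := Finset.mem_Ioc.mp hj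
    have hj1 : 1 ≤ j := hi1.trans hij.le
    by_cases hpp : p i + p j ≤ 1
    · rw [norm_smul, Real.norm_eq_abs]
      have h1 := hγ i j hi1 hil hj1 hjl
      have h2 := hInt i j hil hjl
      have hγnn : (0:ℝ) ≤ π * ω₁ ^ (p i + p j) / ω₁ :=
        div_nonneg (mul_nonneg hπ.le (hωpp _).le) hω0.le
      have hsq : (te - ts)^2 ≤ T₁^2 := by nlinarith [hteT, hste, hT₁pos.le]
      have key : ω₁ ^ (p i + p j) * ω₁ ^ p' / ω₁^2 ≤ ω₁ ^ (p' - 1) := by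
        rw [← Real.rpow_add hω0]
        rw [show ω₁^2 = ω₁ ^ ((2:ℕ):ℝ) from (Real.rpow_natCast ω₁ 2).symm]
        rw [← Real.rpow_sub hω0]
        refine Real.rpow_le_rpow_of_exponent_le hω₁ ?_
        push_cast
        linarith
      calc |gammaCoeff p u i j ω₁|
            * ‖∫ θ in ts..te, (lieBracket f Df i j ts (x ts) - lieBracket f Df i j θ (x θ))‖
          ≤ (π * ω₁ ^ (p i + p j) / ω₁) * (K * (te - ts)^2 / 2) :=
            mul_le_mul h1 h2 (norm_nonneg _) hγnn
        _ ≤ (π * ω₁ ^ (p i + p j) / ω₁) * (K * T₁^2 / 2) := by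
            refine mul_le_mul_of_nonneg_left ?_ hγnn
            have := mul_le_mul_of_nonneg_left hsq hKnn
            linarith
        _ = (π^2 * (2 * (l:ℝ) + 6) * L^2 * C0 * T₁)
              * (ω₁ ^ (p i + p j) * ω₁ ^ p' / ω₁^2) := by
            rw [hKdef, hT₁def]; field_simp
        _ ≤ (π^2 * (2 * (l:ℝ) + 6) * L^2 * C0 * T₁) * ω₁ ^ (p' - 1) := by
            refine mul_le_mul_of_nonneg_left key ?_
            exact mul_nonneg (mul_nonneg (mul_nonneg (by positivity) (sq_nonneg L)) hC0)
              hT₁pos.le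
        _ = B := by rw [hBdef]; ring
    · push_neg at hpp
      rcases hint i j hi1 hil hj1 hjl hpp with hγ0 | hbr0
      · rw [hγ0 ω₁ hω0, zero_smul, norm_zero]; exact hBnn
      · have hz : (∫ θ in ts..te,
            (lieBracket f Df i j ts (x ts) - lieBracket f Df i j θ (x θ))) = 0 := by
          simp [hbr0]
        rw [hz, smul_zero, norm_zero]; exact hBnn
  -- summing up
  have hsum : ‖RL1 l f Df u p ω₁ x ts te‖ ≤ (l:ℝ) * (((l:ℝ) - 1) * B) := by
    rw [RL1]
    refine le_trans (norm_sum_le _ _) ?_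
    have hib : ∀ i ∈ Finset.Icc 1 l,
        ‖∑ j ∈ Finset.Ioc i l, gammaCoeff p u i j ω₁ •
          ∫ θ in ts..te, (lieBracket f Df i j ts (x ts) - lieBracket f Df i j θ (x θ))‖
          ≤ ((l:ℝ) - 1) * B := by
      intro i hi
      obtain ⟨hi1, hil⟩ := Finset.mem_Icc.mp hi
      refine le_trans (norm_sum_le _ _) ?_
      have hc := Finset.sum_le_card_nsmul (Finset.Ioc i l) _ B (fun j hj => hterm i hi j hj)
      rw [Nat.card_Ioc, nsmul_eq_mul] at hc
      refine le_trans hc ?_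
      have hcast : ((l - i : ℕ) : ℝ) ≤ (l:ℝ) - 1 := by
        have h1 : l - i ≤ l - 1 := Nat.sub_le_sub_left hi1 l
        have h2 : ((l - 1 : ℕ) : ℝ) = (l:ℝ) - 1 := by
          rw [Nat.cast_sub (hi1.trans hil)]; simp
        calc ((l - i : ℕ) : ℝ) ≤ ((l - 1 : ℕ) : ℝ) := Nat.cast_le.mpr h1
          _ = (l:ℝ) - 1 := h2
      exact mul_le_mul_of_nonneg_right hcast hBnn
    refine le_trans (Finset.sum_le_card_nsmul _ _ _ hib) ?_
    rw [Nat.card_Icc, nsmul_eq_mul]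
    simp
  refine le_trans hsum ?_
  have hkey : (l:ℝ) * ((l:ℝ) - 1) * (2 * (l:ℝ) + 6) ≤ 2 * ((l:ℝ) + 1)^3 := by
    have : (0:ℝ) ≤ (l:ℝ) := Nat.cast_nonneg l
    nlinarith
  have hX : (0:ℝ) ≤ π^2 * L^2 * C0 * ω₁ ^ (p' - 1) * T₁ :=
    mul_nonneg (mul_nonneg (mul_nonneg (mul_nonneg (sq_nonneg π) (sq_nonneg L)) hC0)
      (hωpp (p' - 1)).le) hT₁pos.le
  calc (l:ℝ) * (((l:ℝ) - 1) * B)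
      = ((l:ℝ) * ((l:ℝ) - 1) * (2 * (l:ℝ) + 6)) * (π^2 * L^2 * C0 * ω₁ ^ (p' - 1) * T₁) := by
        rw [hBdef]; ring
    _ ≤ (2 * ((l:ℝ) + 1)^3) * (π^2 * L^2 * C0 * ω₁ ^ (p' - 1) * T₁) :=
        mul_le_mul_of_nonneg_right hkey hX
    _ = 2 * π ^ 2 * ((l : ℝ) + 1) ^ 3 * L ^ 2 * Λ₁ * ‖x₀‖ * ω₁ ^ (p' - 1) * T₁ := by
        rw [hC0def]; ring
end
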